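/- arXiv:2106.00362 — 8 statements merged into one kernel-verified Lean document; each statement's English description precedes it below -/
import Mathlib

section
/- Let 0 < α < 1 and let g : [0,T] → ℝ be continuous on [0,T], continuously differentiable on (0,T], with g' integrable on (0,T). If g attains its maximum over [0,T] at a point t₀ ∈ (0,T], then ∫₀^{t₀} (t₀ - τ)^{-α} g'(τ) dτ ≥ 0. -/
open MeasureTheory Set

/-- Luchko's lemma: the Caputo-type integral of the derivative of a function
at a point where it attains its maximum is nonnegative. -/
theorem luchko_max_principle (T α t₀ : ℝ) (hT : 0 < T) (hα : 0 < α) (hα1 : α < 1)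
    (g g' : ℝ → ℝ)
    (hg : ContinuousOn g (Set.Icc 0 T))
    (hderiv : ∀ t ∈ Set.Ioc (0:ℝ) T, HasDerivAt g (g' t) t)
    (hg'cont : ContinuousOn g' (Set.Ioc 0 T))
    (hint : IntegrableOn g' (Set.Ioo 0 T))
    (ht₀ : t₀ ∈ Set.Ioc (0:ℝ) T)
    (hmax : ∀ t ∈ Set.Icc (0:ℝ) T, g t ≤ g t₀) :
    0 ≤ ∫ τ in (0:ℝ)..t₀, (t₀ - τ) ^ (-α) * g' τ := by
  obtain ⟨ht₀pos, ht₀T⟩ := ht₀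
  by_cases hI : IntervalIntegrable (fun τ => (t₀ - τ) ^ (-α) * g' τ) volume 0 t₀
  swap
  · rw [intervalIntegral.integral_undef hI]
  set f : ℝ → ℝ := fun τ => (t₀ - τ) ^ (-α) * g' τ with hfdef
  -- derivative of the kernel
  have hu : ∀ τ : ℝ, τ < t₀ →
      HasDerivAt (fun τ : ℝ => (t₀ - τ) ^ (-α)) (α * (t₀ - τ) ^ (-α - 1)) τ := by
    intro τ hτ
    have hpos : (0:ℝ) < t₀ - τ := by linarith
    have h1 : HasDerivAt (fun x : ℝ => t₀ - x) (-1) τ := (hasDerivAt_id τ).const_sub t₀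
    have h2 := (Real.hasDerivAt_rpow_const (p := -α) (Or.inl hpos.ne')).comp τ h1
    exact h2.congr_deriv (by ring)
  -- interval integrability of g' on subintervals of [0, T]
  have hg'II : ∀ a' b' : ℝ, 0 ≤ a' → a' ≤ b' → b' ≤ T → IntervalIntegrable g' volume a' b' := by
    intro a' b' h1 h2 h3
    rw [intervalIntegrable_iff, uIoc_of_le h2, integrableOn_Ioc_iff_integrableOn_Ioo]
    exact hint.mono_set (Ioo_subset_Ioo h1 h3)
  -- key estimate
  have key : ∀ b ∈ Ioo (0:ℝ) t₀,
      -(∫ s in b..t₀, |f s|) ≤ ∫ τ in (0:ℝ)..b, f τ := by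
    intro b hb
    obtain ⟨hb0, hbt⟩ := hb
    have hbT : b ≤ T := le_trans hbt.le ht₀T
    have hεpos : (0:ℝ) < t₀ - b := by linarith
    -- continuity of kernel and its derivative on [0, b]
    have hsubc : ∀ τ ∈ Icc (0:ℝ) b, (0:ℝ) < t₀ - τ := fun τ hτ => by
      have := hτ.2; linarith
    have huc : ContinuousOn (fun τ : ℝ => (t₀ - τ) ^ (-α)) (Icc 0 b) := by
      apply ContinuousOn.rpow_const
      · exact (continuous_const.sub continuous_id).continuousOn
      · exact fun τ hτ => Or.inl (hsubc τ hτ).ne'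
    have hu'c : ContinuousOn (fun τ : ℝ => α * (t₀ - τ) ^ (-α - 1)) (Icc 0 b) := by
      apply ContinuousOn.mul continuousOn_const
      apply ContinuousOn.rpow_const
      · exact (continuous_const.sub continuous_id).continuousOn
      · exact fun τ hτ => Or.inl (hsubc τ hτ).ne'
    have hu'II : IntervalIntegrable (fun τ : ℝ => α * (t₀ - τ) ^ (-α - 1)) volume 0 b := by
      apply ContinuousOn.intervalIntegrable
      rwa [uIcc_of_le hb0.le]
    have hu'gII : IntervalIntegrable (fun τ : ℝ => α * (t₀ - τ) ^ (-α - 1) * g τ) volume 0 b := by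
      apply ContinuousOn.intervalIntegrable
      rw [uIcc_of_le hb0.le]
      exact hu'c.mul (hg.mono (Icc_subset_Icc le_rfl hbT))
    have hfII : IntervalIntegrable f volume 0 b :=
      hI.mono_set (by rw [uIcc_of_le hb0.le, uIcc_of_le ht₀pos.le]; exact Icc_subset_Icc le_rfl hbt.le)
    -- integration by parts
    have hibp : ∫ τ in (0:ℝ)..b, (α * (t₀ - τ) ^ (-α - 1) * g τ + f τ)
        = (t₀ - b) ^ (-α) * g b - t₀ ^ (-α) * g 0 := by
      have := intervalIntegral.integral_eq_sub_of_hasDeriv_right_of_le hb0.le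
        (f := fun τ : ℝ => (t₀ - τ) ^ (-α) * g τ)
        (f' := fun τ : ℝ => α * (t₀ - τ) ^ (-α - 1) * g τ + f τ)
        (huc.mul (hg.mono (Icc_subset_Icc le_rfl hbT)))
        (fun τ hτ => by
          have hd := (hu τ (lt_trans hτ.2 hbt)).mul
            (hderiv τ ⟨hτ.1, le_trans hτ.2.le hbT⟩)
          exact hd.hasDerivWithinAt)
        (hu'gII.add hfII)
      simpa [sub_zero] using this
    have hsplit : ∫ τ in (0:ℝ)..b, f τ
        = (t₀ - b) ^ (-α) * g b - t₀ ^ (-α) * g 0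
          - ∫ τ in (0:ℝ)..b, α * (t₀ - τ) ^ (-α - 1) * g τ := by
      rw [← hibp, intervalIntegral.integral_add hu'gII hfII]; ring
    -- bound the middle integral
    have hkernint : ∫ τ in (0:ℝ)..b, α * (t₀ - τ) ^ (-α - 1)
        = (t₀ - b) ^ (-α) - t₀ ^ (-α) := by
      have := intervalIntegral.integral_eq_sub_of_hasDerivAt
        (f := fun τ : ℝ => (t₀ - τ) ^ (-α))
        (f' := fun τ : ℝ => α * (t₀ - τ) ^ (-α - 1))
        (fun τ hτ => hu τ (by
          rw [uIcc_of_le hb0.le] at hτ; exact lt_of_le_of_lt hτ.2 hbt))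
        hu'II
      simpa [sub_zero] using this
    have hmono1 : ∫ τ in (0:ℝ)..b, α * (t₀ - τ) ^ (-α - 1) * g τ
        ≤ g t₀ * ((t₀ - b) ^ (-α) - t₀ ^ (-α)) := by
      have h1 : ∫ τ in (0:ℝ)..b, α * (t₀ - τ) ^ (-α - 1) * g τ
          ≤ ∫ τ in (0:ℝ)..b, α * (t₀ - τ) ^ (-α - 1) * g t₀ := by
        apply intervalIntegral.integral_mono_on hb0.le hu'gII
        · exact (hu'II.mul_const _)
        · intro τ hτ
          have hnn : 0 ≤ α * (t₀ - τ) ^ (-α - 1) :=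
            mul_nonneg hα.le (Real.rpow_nonneg (hsubc τ hτ).le _)
          exact mul_le_mul_of_nonneg_left (hmax τ ⟨hτ.1, le_trans hτ.2 hbT⟩) hnn
      calc ∫ τ in (0:ℝ)..b, α * (t₀ - τ) ^ (-α - 1) * g τ
          ≤ ∫ τ in (0:ℝ)..b, α * (t₀ - τ) ^ (-α - 1) * g t₀ := h1
        _ = (∫ τ in (0:ℝ)..b, α * (t₀ - τ) ^ (-α - 1)) * g t₀ := by
            rw [← intervalIntegral.integral_mul_const]
        _ = g t₀ * ((t₀ - b) ^ (-α) - t₀ ^ (-α)) := by rw [hkernint]; ring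
    -- FTC on the tail
    have hftc : ∫ s in b..t₀, g' s = g t₀ - g b := by
      apply intervalIntegral.integral_eq_sub_of_hasDerivAt
      · intro s hs
        rw [uIcc_of_le hbt.le] at hs
        exact hderiv s ⟨lt_of_lt_of_le hb0 hs.1, le_trans hs.2 ht₀T⟩
      · exact hg'II b t₀ hb0.le hbt.le ht₀T
    -- tail bound
    have habsII : IntervalIntegrable (fun s => |f s|) volume b t₀ := by
      apply hI.abs.mono_set
      rw [uIcc_of_le hbt.le, uIcc_of_le ht₀pos.le]
      exact Icc_subset_Icc hb0.le le_rfl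
    have htail : (t₀ - b) ^ (-α) * (g t₀ - g b) ≤ ∫ s in b..t₀, |f s| := by
      rw [← hftc, ← intervalIntegral.integral_const_mul]
      apply intervalIntegral.integral_mono_ae_restrict hbt.le
        ((hg'II b t₀ hb0.le hbt.le ht₀T).const_mul _) habsII
      have h1 : ∀ᵐ s ∂(volume.restrict (Icc b t₀)), s ≠ t₀ := by
        apply ae_restrict_of_ae
        rw [ae_iff]
        simpa using Real.volume_singleton (x := t₀)
      filter_upwards [h1, ae_restrict_mem measurableSet_Icc] with s hs hsmem
      have hlt : s < t₀ := lt_of_le_of_ne hsmem.2 hs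
      have hpos : (0:ℝ) < t₀ - s := by linarith
      have hk : (t₀ - b) ^ (-α) ≤ (t₀ - s) ^ (-α) :=
        Real.rpow_le_rpow_of_nonpos hpos (by linarith [hsmem.1]) (by linarith)
      calc (t₀ - b) ^ (-α) * g' s ≤ (t₀ - b) ^ (-α) * |g' s| :=
            mul_le_mul_of_nonneg_left (le_abs_self _) (Real.rpow_nonneg hεpos.le _)
        _ ≤ (t₀ - s) ^ (-α) * |g' s| :=
            mul_le_mul_of_nonneg_right hk (abs_nonneg _)
        _ = |f s| := by
            rw [hfdef, abs_mul, abs_of_nonneg (Real.rpow_nonneg hpos.le _)]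
    -- combine
    have hg0 : g 0 ≤ g t₀ := hmax 0 ⟨le_rfl, hT.le⟩
    have ht₀nn : (0:ℝ) ≤ t₀ ^ (-α) := Real.rpow_nonneg ht₀pos.le _
    rw [hsplit]
    nlinarith [hmono1, htail]
  -- tail integral tends to zero
  have habsII : IntervalIntegrable (fun s => |f s|) volume 0 t₀ := hI.abs
  have hcont : ContinuousOn (fun b => ∫ s in t₀..b, |f s|) (uIcc 0 t₀) :=
    intervalIntegral.continuousOn_primitive_interval' habsII (by
      rw [uIcc_of_le ht₀pos.le]; exact ⟨ht₀pos.le, le_rfl⟩)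
  have htend : Filter.Tendsto (fun b => -2 * ∫ s in b..t₀, |f s|) (nhdsWithin t₀ (Iio t₀))
      (nhds 0) := by
    have h1 : Filter.Tendsto (fun b => ∫ s in t₀..b, |f s|) (nhdsWithin t₀ (Iio t₀))
        (nhds (∫ s in t₀..t₀, |f s|)) := by
      have := (hcont t₀ (by rw [uIcc_of_le ht₀pos.le]; exact ⟨ht₀pos.le, le_rfl⟩)).tendsto
      rw [← nhdsWithin_Ioo_eq_nhdsLT ht₀pos]
      exact this.mono_left (nhdsWithin_mono _ (by
        rw [uIcc_of_le ht₀pos.le]; exact Ioo_subset_Icc_self))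
    rw [intervalIntegral.integral_same] at h1
    have h1' : Filter.Tendsto (fun b => ∫ s in b..t₀, |f s|) (nhdsWithin t₀ (Iio t₀))
        (nhds 0) := by
      have h2 := h1.neg
      rw [neg_zero] at h2
      refine h2.congr fun b => ?_
      rw [← intervalIntegral.integral_symm]
    simpa using h1'.const_mul (-2:ℝ)
  -- conclude
  have hbound : ∀ᶠ b in nhdsWithin t₀ (Iio t₀),
      -2 * (∫ s in b..t₀, |f s|) ≤ ∫ τ in (0:ℝ)..t₀, f τ := by
    filter_upwards [Ioo_mem_nhdsLT_of_mem (⟨ht₀pos, le_rfl⟩ : t₀ ∈ Ioc 0 t₀)] with b hb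
    have hfII1 : IntervalIntegrable f volume 0 b := by
      apply hI.mono_set
      rw [uIcc_of_le hb.1.le, uIcc_of_le ht₀pos.le]
      exact Icc_subset_Icc le_rfl hb.2.le
    have hfII2 : IntervalIntegrable f volume b t₀ := by
      apply hI.mono_set
      rw [uIcc_of_le hb.2.le, uIcc_of_le ht₀pos.le]
      exact Icc_subset_Icc hb.1.le le_rfl
    have hadd := intervalIntegral.integral_add_adjacent_intervals hfII1 hfII2
    have h3 : -(∫ s in b..t₀, |f s|) ≤ ∫ s in b..t₀, f s := by
      have := intervalIntegral.abs_integral_le_integral_abs (f := f) (μ := volume) hb.2.le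
      have := neg_abs_le (∫ s in b..t₀, f s)
      linarith [intervalIntegral.abs_integral_le_integral_abs (f := f) (μ := volume) hb.2.le,
        neg_abs_le (∫ s in b..t₀, f s)]
    have h4 := key b hb
    linarith [hadd ▸ (by linarith : -2 * (∫ s in b..t₀, |f s|) ≤ (∫ τ in (0:ℝ)..b, f τ) + ∫ s in b..t₀, f s)]
  exact le_of_tendsto htend hbound
end

section
/- Let 0 < α < 1 and let g : [0,T] → ℝ be continuous on [0,T], continuously differentiable on (0,T], with g' ∈ L¹(0,T). Suppose g attains its maximum over [0,T] at t₀ ∈ (0,T] and g is not constant on [0,t₀]. Then ∫₀^{t₀} (t₀ - τ)^{-α} g'(τ) dτ > 0. -/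
open MeasureTheory Set
open scoped Interval

open Filter Topology in
/-- Strict version of Luchko's maximum-principle lemma: if additionally `g` is not
constant on `[0, t₀]`, the Caputo-type integral is strictly positive. -/
theorem luchko_max_principle_strict (T α t₀ : ℝ) (hT : 0 < T) (hα : 0 < α) (hα1 : α < 1)
    (g g' : ℝ → ℝ)
    (hg : ContinuousOn g (Set.Icc 0 T))
    (hderiv : ∀ t ∈ Set.Ioc (0:ℝ) T, HasDerivAt g (g' t) t)
    (hg'cont : ContinuousOn g' (Set.Ioc 0 T))
    (hint : IntegrableOn g' (Set.Ioo 0 T))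
    (ht₀ : t₀ ∈ Set.Ioc (0:ℝ) T)
    (hmax : ∀ t ∈ Set.Icc (0:ℝ) T, g t ≤ g t₀)
    (hnc : ¬ ∀ s ∈ Set.Icc (0:ℝ) t₀, g s = g t₀) :
    0 < ∫ τ in (0:ℝ)..t₀, (t₀ - τ) ^ (-α) * g' τ := by
  obtain ⟨ht0, htT⟩ := ht₀
  set m : ℝ := t₀ / 2 with hm
  have hm0 : 0 < m := by positivity
  have hmt : m < t₀ := by simp [hm]; linarith
  set h : ℝ → ℝ := fun τ => g t₀ - g τ with hhdef
  have hhcont : ContinuousOn h (Icc 0 T) := continuousOn_const.sub hg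
  have ht₀mem : t₀ ∈ Icc (0:ℝ) T := ⟨ht0.le, htT⟩
  have hIccsub : Icc (0:ℝ) t₀ ⊆ Icc 0 T := Icc_subset_Icc le_rfl htT
  have hh0 : ∀ t ∈ Icc (0:ℝ) t₀, 0 ≤ h t := fun t ht => sub_nonneg.2 (hmax t (hIccsub ht))
  set K : ℝ → ℝ := fun τ => (t₀ - τ) ^ (-α) with hK
  set K' : ℝ → ℝ := fun τ => α * (t₀ - τ) ^ (-α - 1) with hK'
  -- derivative of the kernel
  have hKd : ∀ x ∈ Iio t₀, HasDerivAt K (K' x) x := by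
    intro x hx
    have hxpos : (0:ℝ) < t₀ - x := by simp only [mem_Iio] at hx; linarith
    have h1 : HasDerivAt (fun τ : ℝ => t₀ - τ) (-1) x := (hasDerivAt_id x).const_sub t₀
    have h2 : HasDerivAt (fun τ : ℝ => (t₀ - τ) ^ (-α)) (-α * (t₀ - x) ^ (-α - 1) * -1) x := (Real.hasDerivAt_rpow_const (x := t₀ - x) (p := -α)
      (Or.inl hxpos.ne')).comp x h1
    convert h2 using 1
    simp [hK']
  -- interval integrability of the kernel on [0, t₀]
  have hKint : IntervalIntegrable K volume 0 t₀ := by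
    have := (intervalIntegral.intervalIntegrable_rpow' (a := t₀) (b := 0) (r := -α)
      (by linarith)).comp_sub_left t₀
    simpa using this
  -- g' interval integrable on [0, t₀]
  have hg'ii : IntervalIntegrable g' volume 0 t₀ := by
    rw [intervalIntegrable_iff_integrableOn_Ioo_of_le ht0.le]
    exact hint.mono_set (Ioo_subset_Ioo le_rfl htT)
  -- continuity of K on sets avoiding t₀
  have hKcont : ∀ b : ℝ, b < t₀ → ContinuousOn K (Icc 0 b) := by
    intro b hb
    apply (continuousOn_const.sub continuousOn_id).rpow_const
    intro x hx
    left
    have : (0:ℝ) < t₀ - x := by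
      rcases hx with ⟨_, hx2⟩; simp; linarith
    exact this.ne'
  have hK'cont : ∀ b : ℝ, b < t₀ → ContinuousOn K' (Icc 0 b) := by
    intro b hb
    apply continuousOn_const.mul
    apply (continuousOn_const.sub continuousOn_id).rpow_const
    intro x hx
    left
    have : (0:ℝ) < t₀ - x := by
      rcases hx with ⟨_, hx2⟩; simp; linarith
    exact this.ne'
  -- integrability of K * g' on [0, t₀]
  have hKg'ii : IntervalIntegrable (fun τ => K τ * g' τ) volume 0 t₀ := by
    have p1 : IntervalIntegrable (fun τ => K τ * g' τ) volume 0 m := by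
      apply IntervalIntegrable.continuousOn_mul
      · exact hg'ii.mono_set (by rw [uIcc_of_le hm0.le, uIcc_of_le ht0.le]; exact Icc_subset_Icc le_rfl hmt.le)
      · rw [uIcc_of_le hm0.le]; exact hKcont m hmt
    have p2 : IntervalIntegrable (fun τ => K τ * g' τ) volume m t₀ := by
      apply IntervalIntegrable.mul_continuousOn
      · exact hKint.mono_set (by rw [uIcc_of_le hmt.le, uIcc_of_le ht0.le]; exact Icc_subset_Icc hm0.le le_rfl)
      · rw [uIcc_of_le hmt.le]
        exact hg'cont.mono (fun x hx => ⟨lt_of_lt_of_le hm0 hx.1, le_trans hx.2 htT⟩)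
    exact p1.trans p2
  -- bound on |g'| near t₀
  obtain ⟨M, hM⟩ := (isCompact_Icc (a := m) (b := t₀)).exists_bound_of_continuousOn
    (hg'cont.mono (fun x hx => ⟨lt_of_lt_of_le hm0 hx.1, le_trans hx.2 htT⟩))
  -- FTC representation of h on [m, t₀]
  have hftc : ∀ τ ∈ Icc m t₀, h τ = ∫ s in τ..t₀, g' s := by
    intro τ hτ
    have hsub : Icc τ t₀ ⊆ Ioc 0 T := fun x hx =>
      ⟨lt_of_lt_of_le hm0 (le_trans hτ.1 hx.1), le_trans hx.2 htT⟩
    have hii : IntervalIntegrable g' volume τ t₀ := by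
      apply hg'ii.mono_set
      rw [uIcc_of_le hτ.2, uIcc_of_le ht0.le]
      exact Icc_subset_Icc (le_trans hm0.le hτ.1) le_rfl
    have := intervalIntegral.integral_eq_sub_of_hasDerivAt (f := g) (f' := g')
      (a := τ) (b := t₀) (fun x hx => hderiv x (hsub (by rwa [uIcc_of_le hτ.2] at hx))) hii
    rw [this]
  -- the key bound |h τ| ≤ M * (t₀ - τ) on [m, t₀]
  have hhbd : ∀ τ ∈ Icc m t₀, |h τ| ≤ M * (t₀ - τ) := by
    intro τ hτ
    rw [hftc τ hτ]
    have := intervalIntegral.norm_integral_le_of_norm_le_const (a := τ) (b := t₀) (C := M)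
      (f := g') (fun x hx => by
        rw [uIoc_of_le hτ.2] at hx
        exact hM x ⟨le_trans hτ.1 hx.1.le, hx.2⟩)
    rw [Real.norm_eq_abs] at this
    calc |∫ s in τ..t₀, g' s| ≤ M * |t₀ - τ| := this
      _ = M * (t₀ - τ) := by
          rw [abs_of_nonneg (show (0:ℝ) ≤ t₀ - τ by linarith [hτ.2])]
  have hMnn : 0 ≤ M := le_trans (abs_nonneg _) (hM m ⟨le_rfl, hmt.le⟩)
  -- integrability of K' * h on [0, t₀]
  have hK'hii : IntervalIntegrable (fun τ => K' τ * h τ) volume 0 t₀ := by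
    have p1 : IntervalIntegrable (fun τ => K' τ * h τ) volume 0 m := by
      apply ContinuousOn.intervalIntegrable
      rw [uIcc_of_le hm0.le]
      exact (hK'cont m hmt).mul (hhcont.mono (fun x hx => ⟨hx.1, le_trans hx.2 (le_trans hmt.le htT)⟩))
    have p2 : IntervalIntegrable (fun τ => K' τ * h τ) volume m t₀ := by
      rw [intervalIntegrable_iff_integrableOn_Ico_of_le hmt.le]
      have hmeas : AEStronglyMeasurable (fun τ => K' τ * h τ) (volume.restrict (Ico m t₀)) := by
        apply ContinuousOn.aestronglyMeasurable _ measurableSet_Ico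
        apply ContinuousOn.mul
        · apply continuousOn_const.mul
          apply (continuousOn_const.sub continuousOn_id).rpow_const
          intro x hx
          left
          have : (0:ℝ) < t₀ - x := by rcases hx with ⟨_, hx2⟩; simp at hx2 ⊢; linarith
          exact this.ne'
        · exact hhcont.mono (fun x hx => ⟨le_trans hm0.le hx.1, le_trans hx.2.le htT⟩)
      have hdom : IntegrableOn (fun τ => (α * M) * K τ) (Ico m t₀) volume := by
        have := (hKint.mono_set (c := m) (d := t₀)
          (by rw [uIcc_of_le hmt.le, uIcc_of_le ht0.le]; exact Icc_subset_Icc hm0.le le_rfl)).const_mul (α * M)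
        rw [intervalIntegrable_iff_integrableOn_Ico_of_le hmt.le] at this
        exact this
      apply Integrable.mono hdom hmeas
      filter_upwards [ae_restrict_mem measurableSet_Ico] with τ hτ
      have hpos : (0:ℝ) < t₀ - τ := by simp at hτ ⊢; linarith [hτ.2]
      have h1 : |h τ| ≤ M * (t₀ - τ) := hhbd τ ⟨hτ.1, hτ.2.le⟩
      have hKpos : (0:ℝ) ≤ (t₀ - τ) ^ (-α - 1) := Real.rpow_nonneg hpos.le _
      rw [Real.norm_eq_abs, Real.norm_eq_abs, abs_mul]
      have e1 : |K' τ| = α * (t₀ - τ) ^ (-α - 1) := by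
        rw [hK', abs_mul, abs_of_nonneg hα.le, abs_of_nonneg hKpos]
      rw [e1]
      calc α * (t₀ - τ) ^ (-α - 1) * |h τ|
          ≤ α * (t₀ - τ) ^ (-α - 1) * (M * (t₀ - τ)) := by
            apply mul_le_mul_of_nonneg_left h1 (by positivity)
        _ = α * M * ((t₀ - τ) ^ (-α - 1) * (t₀ - τ) ^ (1:ℝ)) := by
            rw [Real.rpow_one]; ring
        _ = α * M * K τ := by
            rw [← Real.rpow_add hpos]
            norm_num
            exact Or.inl rfl
        _ ≤ |α * M * K τ| := le_abs_self _
    exact p1.trans p2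
  -- integration by parts identity on [0, b] for b ∈ Ioo 0 t₀
  have hIBP : ∀ b ∈ Ioo (0:ℝ) t₀, ∫ τ in (0:ℝ)..b, K τ * g' τ =
      K 0 * h 0 - K b * h b + ∫ τ in (0:ℝ)..b, K' τ * h τ := by
    intro b hb
    have hbsub : Icc (0:ℝ) b ⊆ Icc 0 T := Icc_subset_Icc le_rfl (le_trans hb.2.le htT)
    have hu : ContinuousOn K [[0, b]] := by rw [uIcc_of_le hb.1.le]; exact hKcont b hb.2
    have hv : ContinuousOn (fun τ => g τ - g t₀) [[0, b]] := by
      rw [uIcc_of_le hb.1.le]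
      exact (hg.mono hbsub).sub continuousOn_const
    have huu' : ∀ x ∈ Ioo (min (0:ℝ) b) (max 0 b), HasDerivAt K (K' x) x := by
      rw [min_eq_left hb.1.le, max_eq_right hb.1.le]
      exact fun x hx => hKd x (lt_trans hx.2 hb.2)
    have hvv' : ∀ x ∈ Ioo (min (0:ℝ) b) (max 0 b),
        HasDerivAt (fun τ => g τ - g t₀) (g' x) x := by
      rw [min_eq_left hb.1.le, max_eq_right hb.1.le]
      exact fun x hx => (hderiv x ⟨hx.1, le_trans hx.2.le (le_trans hb.2.le htT)⟩).sub_const _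
    have hu' : IntervalIntegrable K' volume 0 b := by
      apply ContinuousOn.intervalIntegrable
      rw [uIcc_of_le hb.1.le]
      exact hK'cont b hb.2
    have hv' : IntervalIntegrable g' volume 0 b := by
      apply hg'ii.mono_set
      rw [uIcc_of_le hb.1.le, uIcc_of_le ht0.le]
      exact Icc_subset_Icc le_rfl hb.2.le
    have := intervalIntegral.integral_mul_deriv_eq_deriv_mul_of_hasDerivAt
      hu hv huu' hvv' hu' hv'
    rw [this]
    have e1 : (fun x => K' x * (g x - g t₀)) = fun x => -(K' x * h x) := by
      funext x; simp [hhdef]; ring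
    rw [e1, intervalIntegral.integral_neg]
    simp only [hhdef]
    ring
  -- limits along 𝓝[Ioo 0 t₀] t₀
  set l : Filter ℝ := 𝓝[Ioo 0 t₀] t₀ with hl
  have hleq : l = 𝓝[<] t₀ := nhdsWithin_Ioo_eq_nhdsLT ht0
  haveI : l.NeBot := by rw [hleq]; infer_instance
  -- limit of the main integral
  have hΦ : Tendsto (fun b => ∫ τ in (0:ℝ)..b, K τ * g' τ) l
      (𝓝 (∫ τ in (0:ℝ)..t₀, K τ * g' τ)) := by
    have hcont := intervalIntegral.continuousOn_primitive_interval' hKg'ii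
      (left_mem_uIcc (a := (0:ℝ)) (b := t₀))
    rw [uIcc_of_le ht0.le] at hcont
    have h1 := hcont t₀ (right_mem_Icc.mpr ht0.le)
    exact h1.mono_left (nhdsWithin_mono t₀ Ioo_subset_Icc_self)
  -- limit of the h-integral
  have hΨ : Tendsto (fun b => ∫ τ in (0:ℝ)..b, K' τ * h τ) l
      (𝓝 (∫ τ in (0:ℝ)..t₀, K' τ * h τ)) := by
    have hcont := intervalIntegral.continuousOn_primitive_interval' hK'hii
      (left_mem_uIcc (a := (0:ℝ)) (b := t₀))
    rw [uIcc_of_le ht0.le] at hcont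
    have h1 := hcont t₀ (right_mem_Icc.mpr ht0.le)
    exact h1.mono_left (nhdsWithin_mono t₀ Ioo_subset_Icc_self)
  -- limit of the boundary term
  have hbdry : Tendsto (fun b => K b * h b) l (𝓝 0) := by
    apply squeeze_zero_norm' (a := fun b => M * (t₀ - b) ^ (1 - α))
    · have hev1 : ∀ᶠ b in l, b ∈ Ioo (0:ℝ) t₀ := eventually_mem_nhdsWithin
      have hev2 : ∀ᶠ b in l, m < b := by
        rw [hleq]
        exact eventually_nhdsWithin_of_eventually_nhds (eventually_gt_nhds hmt)
      filter_upwards [hev1, hev2] with b hb1 hb2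
      have hpos : (0:ℝ) < t₀ - b := by linarith [hb1.2]
      have h1 : |h b| ≤ M * (t₀ - b) := hhbd b ⟨hb2.le, hb1.2.le⟩
      rw [Real.norm_eq_abs, abs_mul]
      have e1 : |K b| = (t₀ - b) ^ (-α) := by
        rw [hK, abs_of_nonneg (Real.rpow_nonneg hpos.le _)]
      rw [e1]
      calc (t₀ - b) ^ (-α) * |h b| ≤ (t₀ - b) ^ (-α) * (M * (t₀ - b)) := by
            apply mul_le_mul_of_nonneg_left h1 (Real.rpow_nonneg hpos.le _)
        _ = M * ((t₀ - b) ^ (-α) * (t₀ - b) ^ (1:ℝ)) := by rw [Real.rpow_one]; ring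
        _ = M * (t₀ - b) ^ (1 - α) := by
            rw [← Real.rpow_add hpos]; ring_nf
    · have h1 : Tendsto (fun b : ℝ => t₀ - b) l (𝓝 0) := by
        have : Tendsto (fun b : ℝ => t₀ - b) (𝓝 t₀) (𝓝 (t₀ - t₀)) :=
          (continuous_const.sub continuous_id).tendsto t₀
        rw [sub_self] at this
        exact this.mono_left nhdsWithin_le_nhds
      have h2 : ContinuousAt (fun x : ℝ => x ^ (1 - α)) 0 :=
        Real.continuousAt_rpow_const 0 (1 - α) (Or.inr (by linarith))
      have h3 := (h2.tendsto.comp h1).const_mul M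
      rw [Real.zero_rpow (by linarith : (1:ℝ) - α ≠ 0), mul_zero] at h3
      exact h3
  -- identify the limit
  have hkey : ∫ τ in (0:ℝ)..t₀, K τ * g' τ =
      K 0 * h 0 + ∫ τ in (0:ℝ)..t₀, K' τ * h τ := by
    have hev : ∀ᶠ b in l, (∫ τ in (0:ℝ)..b, K τ * g' τ) =
        K 0 * h 0 - K b * h b + ∫ τ in (0:ℝ)..b, K' τ * h τ :=
      eventually_mem_nhdsWithin.mono (fun b hb => hIBP b hb)
    have hR : Tendsto (fun b => K 0 * h 0 - K b * h b + ∫ τ in (0:ℝ)..b, K' τ * h τ) l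
        (𝓝 (K 0 * h 0 - 0 + ∫ τ in (0:ℝ)..t₀, K' τ * h τ)) :=
      (tendsto_const_nhds.sub hbdry).add hΨ
    have := tendsto_nhds_unique (hΦ.congr' hev) hR
    rw [this]; ring
  -- find a point where h is positive
  push_neg at hnc
  obtain ⟨s, hsmem, hsne⟩ := hnc
  have hhsne : h s ≠ 0 := sub_ne_zero.mpr (Ne.symm hsne)
  have hhs : 0 < h s := lt_of_le_of_ne (hh0 s hsmem) (Ne.symm hhsne)
  have hst : s < t₀ := by
    rcases lt_or_eq_of_le hsmem.2 with h1 | h1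
    · exact h1
    · exfalso; rw [h1] at hhs; simp [hhdef] at hhs
  -- move to an interior point via continuity
  obtain ⟨s', hs'pos, hs'⟩ : ∃ x, 0 < h x ∧ x ∈ Ioo s t₀ := by
    have hcw : ContinuousWithinAt h (Icc 0 T) s := hhcont s (hIccsub hsmem)
    have hcw2 : Tendsto h (𝓝[Ioo s t₀] s) (𝓝 (h s)) :=
      hcw.mono_left (nhdsWithin_mono s
        (fun x hx => ⟨le_trans hsmem.1 hx.1.le, le_trans hx.2.le htT⟩))
    have hev : ∀ᶠ x in 𝓝[Ioo s t₀] s, 0 < h x := hcw2.eventually (eventually_gt_nhds hhs)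
    haveI : (𝓝[Ioo s t₀] s).NeBot := by
      rw [nhdsWithin_Ioo_eq_nhdsGT hst]; infer_instance
    exact (hev.and eventually_mem_nhdsWithin).exists
  have hs'Ioo : s' ∈ Ioo 0 t₀ := ⟨lt_of_le_of_lt hsmem.1 hs'.1, hs'.2⟩
  have hs'0 : 0 < s' := hs'Ioo.1
  have hs't : s' < t₀ := hs'Ioo.2
  -- find a small interval around s' where h is large
  have hcA : ContinuousAt h s' :=
    hhcont.continuousAt (Icc_mem_nhds hs'0 (lt_of_lt_of_le hs't htT))
  set c : ℝ := h s' / 2 with hc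
  have hcpos : 0 < c := half_pos hs'pos
  have hev2 : ∀ᶠ x in 𝓝 s', c < h x :=
    hcA.eventually (eventually_gt_nhds (half_lt_self hs'pos))
  obtain ⟨ε, hεpos, hball⟩ := Metric.eventually_nhds_iff_ball.mp hev2
  set u : ℝ := max (s'/2) (s' - ε/2) with hu
  set v : ℝ := min ((s' + t₀)/2) (s' + ε/2) with hv
  have hu0 : 0 < u := lt_of_lt_of_le (half_pos hs'0) (le_max_left _ _)
  have hus' : u < s' := max_lt (by linarith) (by linarith)
  have hs'v : s' < v := lt_min (by linarith) (by linarith)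
  have hvt : v < t₀ := lt_of_le_of_lt (min_le_left _ _) (by linarith)
  have huv : u < v := hus'.trans hs'v
  have hut : u ≤ t₀ := by linarith
  have hvnn : 0 ≤ v := by linarith
  have hIccuv : ∀ x ∈ Icc u v, c < h x := by
    intro x hx
    apply hball
    rw [Metric.mem_ball, Real.dist_eq, abs_sub_lt_iff]
    have h1 : x ≤ s' + ε/2 := le_trans hx.2 (min_le_right _ _)
    have h2 : s' - ε/2 ≤ x := le_trans (le_max_right _ _) hx.1
    constructor <;> linarith
  -- pointwise nonnegativity of K' * h on [0, t₀]
  have hptnn : ∀ τ ∈ Icc (0:ℝ) t₀, 0 ≤ K' τ * h τ := by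
    intro τ hτ
    apply mul_nonneg
    · exact mul_nonneg hα.le (Real.rpow_nonneg (by linarith [hτ.2]) _)
    · exact hh0 τ hτ
  -- split the h-integral
  have i1 : IntervalIntegrable (fun τ => K' τ * h τ) volume 0 u :=
    hK'hii.mono_set (by
      rw [uIcc_of_le hu0.le, uIcc_of_le ht0.le]
      exact Icc_subset_Icc le_rfl hut)
  have i2 : IntervalIntegrable (fun τ => K' τ * h τ) volume u v :=
    hK'hii.mono_set (by
      rw [uIcc_of_le huv.le, uIcc_of_le ht0.le]
      exact Icc_subset_Icc hu0.le hvt.le)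
  have i3 : IntervalIntegrable (fun τ => K' τ * h τ) volume v t₀ :=
    hK'hii.mono_set (by
      rw [uIcc_of_le hvt.le, uIcc_of_le ht0.le]
      exact Icc_subset_Icc hvnn le_rfl)
  have hsplit : ∫ τ in (0:ℝ)..t₀, K' τ * h τ =
      (∫ τ in (0:ℝ)..u, K' τ * h τ) + (∫ τ in u..v, K' τ * h τ) +
        (∫ τ in v..t₀, K' τ * h τ) := by
    rw [intervalIntegral.integral_add_adjacent_intervals i1 i2,
      intervalIntegral.integral_add_adjacent_intervals (i1.trans i2) i3]
  -- bound the middle piece from below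
  have hconst : (0:ℝ) < α * t₀ ^ (-α - 1) * c :=
    mul_pos (mul_pos hα (Real.rpow_pos_of_pos ht0 _)) hcpos
  have hmid : (v - u) * (α * t₀ ^ (-α - 1) * c) ≤ ∫ τ in u..v, K' τ * h τ := by
    have hle : ∀ x ∈ Icc u v, α * t₀ ^ (-α - 1) * c ≤ K' x * h x := by
      intro x hx
      have hx0 : 0 < t₀ - x := by linarith [hx.2]
      have hr : t₀ ^ (-α - 1) ≤ (t₀ - x) ^ (-α - 1) :=
        Real.rpow_le_rpow_of_nonpos hx0 (by linarith [hx.1]) (by linarith)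
      have hhx : c ≤ h x := (hIccuv x hx).le
      calc α * t₀ ^ (-α - 1) * c ≤ α * (t₀ - x) ^ (-α - 1) * c := by
            apply mul_le_mul_of_nonneg_right _ hcpos.le
            exact mul_le_mul_of_nonneg_left hr hα.le
        _ ≤ α * (t₀ - x) ^ (-α - 1) * h x := by
            apply mul_le_mul_of_nonneg_left hhx
            exact mul_nonneg hα.le (Real.rpow_nonneg hx0.le _)
        _ = K' x * h x := rfl
    have := intervalIntegral.integral_mono_on (μ := volume) huv.le
      (intervalIntegrable_const (c := α * t₀ ^ (-α - 1) * c)) i2 hle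
    rwa [intervalIntegral.integral_const, smul_eq_mul] at this
  have h1nn : 0 ≤ ∫ τ in (0:ℝ)..u, K' τ * h τ :=
    intervalIntegral.integral_nonneg hu0.le
      (fun x hx => hptnn x ⟨hx.1, le_trans hx.2 hut⟩)
  have h3nn : 0 ≤ ∫ τ in v..t₀, K' τ * h τ :=
    intervalIntegral.integral_nonneg hvt.le
      (fun x hx => hptnn x ⟨le_trans hvnn hx.1, hx.2⟩)
  have hΨpos : 0 < ∫ τ in (0:ℝ)..t₀, K' τ * h τ := by
    rw [hsplit]
    have : 0 < (v - u) * (α * t₀ ^ (-α - 1) * c) := mul_pos (by linarith) hconst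
    linarith
  -- conclude
  have hK0 : 0 ≤ K 0 * h 0 := by
    apply mul_nonneg
    · exact Real.rpow_nonneg (by simpa using ht0.le) _
    · exact hh0 0 ⟨le_rfl, ht0.le⟩
  have : 0 < ∫ τ in (0:ℝ)..t₀, K τ * g' τ := by
    rw [hkey]; linarith
  simpa [hK] using this
end

section
/- Let X be a Banach space, 0 < β < r ≤ 1, and T > 0. Define the weighted Hölder space F^{r,β}((0,T];X) as the set of continuous f : (0,T] → X such that lim_{t→0} t^{1-r} f(t) exists, sup_{0 < s < t ≤ T} s^{1-r+β} ‖f(t)-f(s)‖ / (t-s)^β < ∞, and sup_{0 < s < t'} s^{1-r+β}‖f(t')-f(s)‖/(t'-s)^β → 0 as t' → 0. Then F^{r,β}((0,T];X) is a Banach space with norm ‖f‖ = sup_{0<t≤T} t^{1-r}‖f(t)‖ + sup_{0<s<t≤T} s^{1-r+β}‖f(t)-f(s)‖/(t-s)^β. -/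
open MeasureTheory Set Filter Topology

/-- The set of weighted Hölder difference quotients of `f` for pairs `0 < s < t ≤ T`. -/
def holderQuotients {X : Type*} [NormedAddCommGroup X] (r β T : ℝ) (f : ℝ → X) : Set ℝ :=
  {c | ∃ s t : ℝ, 0 < s ∧ s < t ∧ t ≤ T ∧
    c = s ^ (1 - r + β) * ‖f t - f s‖ / (t - s) ^ β}

/-- Membership in the weighted Hölder space `F^{r,β}((0,T];X)`. -/
def MemF {X : Type*} [NormedAddCommGroup X] [NormedSpace ℝ X]
    (r β T : ℝ) (f : ℝ → X) : Prop :=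
  ContinuousOn f (Set.Ioc 0 T) ∧
  (∃ l : X, Tendsto (fun t : ℝ => t ^ (1 - r) • f t) (𝓝[>] (0:ℝ)) (𝓝 l)) ∧
  BddAbove (holderQuotients r β T f) ∧
  Tendsto (fun t' : ℝ => sSup (holderQuotients r β t' f)) (𝓝[>] (0:ℝ)) (𝓝 0)

/-- The weighted Hölder norm on `F^{r,β}((0,T];X)`. -/
noncomputable def Fnorm {X : Type*} [NormedAddCommGroup X] (r β T : ℝ) (f : ℝ → X) : ℝ :=
  sSup ((fun t : ℝ => t ^ (1 - r) * ‖f t‖) '' Set.Ioc 0 T) + sSup (holderQuotients r β T f)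

section helpers

variable {X : Type*} [NormedAddCommGroup X] [NormedSpace ℝ X]

lemma hQ_nonneg (r β T : ℝ) (f : ℝ → X) : ∀ c ∈ holderQuotients r β T f, 0 ≤ c := by
  rintro c ⟨s, t, hs, hst, htT, rfl⟩
  have h1 : (0:ℝ) ≤ s ^ (1 - r + β) := Real.rpow_nonneg hs.le _
  have h2 : (0:ℝ) ≤ (t - s) ^ β := Real.rpow_nonneg (by linarith) _
  exact div_nonneg (mul_nonneg h1 (norm_nonneg _)) h2

lemma sSup_hQ_nonneg (r β T : ℝ) (f : ℝ → X) : 0 ≤ sSup (holderQuotients r β T f) :=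
  Real.sSup_nonneg (hQ_nonneg r β T f)

lemma Nset_nonneg (r T : ℝ) (f : ℝ → X) :
    ∀ c ∈ (fun t : ℝ => t ^ (1 - r) * ‖f t‖) '' Set.Ioc 0 T, 0 ≤ c := by
  rintro c ⟨t, ht, rfl⟩
  exact mul_nonneg (Real.rpow_nonneg ht.1.le _) (norm_nonneg _)

lemma sSup_Nset_nonneg (r T : ℝ) (f : ℝ → X) :
    0 ≤ sSup ((fun t : ℝ => t ^ (1 - r) * ‖f t‖) '' Set.Ioc 0 T) :=
  Real.sSup_nonneg (Nset_nonneg r T f)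

lemma Fnorm_nonneg (r β T : ℝ) (f : ℝ → X) : 0 ≤ Fnorm r β T f :=
  add_nonneg (sSup_Nset_nonneg r T f) (sSup_hQ_nonneg r β T f)

lemma hQ_mono (r β : ℝ) {t₁ t₂ : ℝ} (h : t₁ ≤ t₂) (f : ℝ → X) :
    holderQuotients r β t₁ f ⊆ holderQuotients r β t₂ f := by
  rintro c ⟨s, t, hs, hst, htT, rfl⟩
  exact ⟨s, t, hs, hst, htT.trans h, rfl⟩

lemma quot_tri {p d : ℝ} (hp : 0 ≤ p) (hd : 0 < d) {na nb nc : ℝ} (h : na ≤ nb + nc) :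
    p * na / d ≤ p * nb / d + p * nc / d := by
  rw [← add_div, ← mul_add]
  gcongr

/-- Weighted boundedness on `(0,T]` from continuity and the limit at `0`. -/
lemma bdd_Nset {r T : ℝ} (hT : 0 < T) {f : ℝ → X} (hc : ContinuousOn f (Set.Ioc 0 T))
    (hl : ∃ l : X, Tendsto (fun t : ℝ => t ^ (1 - r) • f t) (𝓝[>] (0:ℝ)) (𝓝 l)) :
    BddAbove ((fun t : ℝ => t ^ (1 - r) * ‖f t‖) '' Set.Ioc 0 T) := by
  obtain ⟨l, hl⟩ := hl
  have hnorm : Tendsto (fun t : ℝ => ‖t ^ (1 - r) • f t‖) (𝓝[>] (0:ℝ)) (𝓝 ‖l‖) := hl.norm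
  have heq : ∀ t : ℝ, 0 < t → ‖t ^ (1 - r) • f t‖ = t ^ (1 - r) * ‖f t‖ := by
    intro t ht
    rw [norm_smul, Real.norm_eq_abs, abs_of_nonneg (Real.rpow_nonneg ht.le _)]
  have hev : ∀ᶠ t in 𝓝[>] (0:ℝ), t ^ (1 - r) * ‖f t‖ < ‖l‖ + 1 := by
    filter_upwards [hnorm.eventually_lt_const (lt_add_one ‖l‖),
      self_mem_nhdsWithin] with t h1 h2
    rwa [heq t h2] at h1
  rw [eventually_iff, mem_nhdsGT_iff_exists_Ioo_subset] at hev
  obtain ⟨δ, hδ, hδs⟩ := hev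
  have hδ0 : (0:ℝ) < δ := hδ
  set c := min δ T with hc'
  have hc0 : 0 < c := lt_min hδ0 hT
  have hsub : Set.Icc c T ⊆ Set.Ioc 0 T := fun x hx => ⟨hc0.trans_le hx.1, hx.2⟩
  have hcont : ContinuousOn (fun t : ℝ => t ^ (1 - r) * ‖f t‖) (Set.Icc c T) := by
    apply ContinuousOn.mul ?_ ((hc.mono hsub).norm)
    intro x hx
    exact (Real.continuousAt_rpow_const x _ (Or.inl (ne_of_gt (hc0.trans_le hx.1)))).continuousWithinAt
  obtain ⟨M, hM⟩ := (isCompact_Icc.bddAbove_image hcont)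
  refine ⟨max (‖l‖ + 1) M, ?_⟩
  rintro x ⟨t, ht, rfl⟩
  by_cases hlt : t < δ
  · exact le_max_of_le_left (hδs ⟨ht.1, hlt⟩).le
  · exact le_max_of_le_right (hM ⟨t, ⟨(min_le_left δ T).trans (not_lt.1 hlt), ht.2⟩, rfl⟩)

lemma memF_sub {r β T : ℝ} (hT : 0 < T) {f g : ℝ → X} (hf : MemF r β T f) (hg : MemF r β T g) :
    MemF r β T (f - g) := by
  obtain ⟨hfc, ⟨lf, hlf⟩, hfb, hft⟩ := hf
  obtain ⟨hgc, ⟨lg, hlg⟩, hgb, hgt⟩ := hg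
  refine ⟨hfc.sub hgc, ⟨lf - lg, ?_⟩, ?_, ?_⟩
  · have := hlf.sub hlg
    apply this.congr
    intro t
    simp [smul_sub]
  · obtain ⟨Mf, hMf⟩ := hfb
    obtain ⟨Mg, hMg⟩ := hgb
    refine ⟨Mf + Mg, ?_⟩
    rintro c ⟨s, t, hs, hst, htT, rfl⟩
    have hd : (0:ℝ) < (t - s) ^ β := Real.rpow_pos_of_pos (by linarith) _
    have hp : (0:ℝ) ≤ s ^ (1 - r + β) := Real.rpow_nonneg hs.le _
    have htri : ‖(f - g) t - (f - g) s‖ ≤ ‖f t - f s‖ + ‖g t - g s‖ := by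
      simp only [Pi.sub_apply]
      rw [sub_sub_sub_comm]
      exact norm_sub_le _ _
    calc s ^ (1 - r + β) * ‖(f - g) t - (f - g) s‖ / (t - s) ^ β
        ≤ s ^ (1 - r + β) * ‖f t - f s‖ / (t - s) ^ β
          + s ^ (1 - r + β) * ‖g t - g s‖ / (t - s) ^ β := quot_tri hp hd htri
      _ ≤ Mf + Mg := add_le_add (hMf ⟨s, t, hs, hst, htT, rfl⟩) (hMg ⟨s, t, hs, hst, htT, rfl⟩)
  · have hadd : Tendsto (fun t' : ℝ => sSup (holderQuotients r β t' f)
        + sSup (holderQuotients r β t' g)) (𝓝[>] (0:ℝ)) (𝓝 0) := by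
      simpa using hft.add hgt
    apply tendsto_of_tendsto_of_tendsto_of_le_of_le' tendsto_const_nhds hadd
    · exact Eventually.of_forall fun t' => Real.sSup_nonneg (hQ_nonneg r β t' _)
    · filter_upwards [Ioo_mem_nhdsGT_of_mem (Set.left_mem_Ico.2 hT)] with t' ht'
      have hbf : BddAbove (holderQuotients r β t' f) :=
        hfb.mono (hQ_mono r β ht'.2.le f)
      have hbg : BddAbove (holderQuotients r β t' g) :=
        hgb.mono (hQ_mono r β ht'.2.le g)
      apply Real.sSup_le
      · rintro c ⟨s, t, hs, hst, htT, rfl⟩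
        have hd : (0:ℝ) < (t - s) ^ β := Real.rpow_pos_of_pos (by linarith) _
        have hp : (0:ℝ) ≤ s ^ (1 - r + β) := Real.rpow_nonneg hs.le _
        have htri : ‖(f - g) t - (f - g) s‖ ≤ ‖f t - f s‖ + ‖g t - g s‖ := by
          simp only [Pi.sub_apply]
          rw [sub_sub_sub_comm]
          exact norm_sub_le _ _
        calc s ^ (1 - r + β) * ‖(f - g) t - (f - g) s‖ / (t - s) ^ β
            ≤ s ^ (1 - r + β) * ‖f t - f s‖ / (t - s) ^ β
              + s ^ (1 - r + β) * ‖g t - g s‖ / (t - s) ^ β := quot_tri hp hd htri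
          _ ≤ _ := add_le_add (le_csSup hbf ⟨s, t, hs, hst, htT, rfl⟩)
              (le_csSup hbg ⟨s, t, hs, hst, htT, rfl⟩)
      · exact add_nonneg (Real.sSup_nonneg (hQ_nonneg r β t' f))
          (Real.sSup_nonneg (hQ_nonneg r β t' g))

end helpers

/-- `F^{r,β}((0,T];X)` is a Banach space with the weighted Hölder norm: every
Cauchy sequence (for that norm) of elements of the space converges, in that norm,
to an element of the space. -/
theorem F_space_complete {X : Type*} [NormedAddCommGroup X] [NormedSpace ℝ X] [CompleteSpace X]
    (r β T : ℝ) (hβ : 0 < β) (hβr : β < r) (hr : r ≤ 1) (hT : 0 < T)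
    (f : ℕ → ℝ → X) (hf : ∀ n, MemF r β T (f n))
    (hcauchy : ∀ ε > (0:ℝ), ∃ N : ℕ, ∀ m ≥ N, ∀ n ≥ N,
      Fnorm r β T (f m - f n) < ε) :
    ∃ g : ℝ → X, MemF r β T g ∧
      Tendsto (fun n => Fnorm r β T (f n - g)) atTop (𝓝 0) := by
  classical
  have hNX : Nonempty X := ⟨0⟩
  have hsub : ∀ m n : ℕ, MemF r β T (f m - f n) := fun m n => memF_sub hT (hf m) (hf n)
  have hbddN : ∀ m n : ℕ,
      BddAbove ((fun t : ℝ => t ^ (1 - r) * ‖(f m - f n) t‖) '' Set.Ioc 0 T) :=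
    fun m n => bdd_Nset hT (hsub m n).1 (hsub m n).2.1
  -- pointwise bounds by the norm
  have hptN : ∀ m n : ℕ, ∀ t ∈ Set.Ioc (0:ℝ) T,
      t ^ (1 - r) * ‖f m t - f n t‖ ≤ Fnorm r β T (f m - f n) := by
    intro m n t ht
    have h1 : t ^ (1 - r) * ‖(f m - f n) t‖
        ≤ sSup ((fun t : ℝ => t ^ (1 - r) * ‖(f m - f n) t‖) '' Set.Ioc 0 T) :=
      le_csSup (hbddN m n) ⟨t, ht, rfl⟩
    have h2 := sSup_hQ_nonneg r β T (f m - f n)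
    simp only [Pi.sub_apply] at h1
    exact h1.trans (le_add_of_nonneg_right h2)
  have hptH : ∀ m n : ℕ, ∀ s t : ℝ, 0 < s → s < t → t ≤ T →
      s ^ (1 - r + β) * ‖(f m t - f n t) - (f m s - f n s)‖ / (t - s) ^ β
        ≤ Fnorm r β T (f m - f n) := by
    intro m n s t hs hst htT
    have h1 : s ^ (1 - r + β) * ‖(f m - f n) t - (f m - f n) s‖ / (t - s) ^ β
        ≤ sSup (holderQuotients r β T (f m - f n)) :=
      le_csSup (hsub m n).2.2.1 ⟨s, t, hs, hst, htT, rfl⟩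
    have h2 := sSup_Nset_nonneg r T (f m - f n)
    simp only [Pi.sub_apply] at h1
    exact h1.trans (le_add_of_nonneg_left h2)
  -- pointwise Cauchy and the limit function g
  have hgt : ∀ t ∈ Set.Ioc (0:ℝ) T, CauchySeq (fun n => f n t) := by
    intro t ht
    rw [Metric.cauchySeq_iff]
    intro ε hε
    have htp : (0:ℝ) < t ^ (1 - r) := Real.rpow_pos_of_pos ht.1 _
    obtain ⟨N, hN⟩ := hcauchy (ε * t ^ (1 - r)) (mul_pos hε htp)
    refine ⟨N, fun m hm n hn => ?_⟩
    rw [dist_eq_norm]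
    have h1 := (hptN m n t ht).trans_lt (hN m hm n hn)
    have h2 : t ^ (1 - r) * ‖f m t - f n t‖ < t ^ (1 - r) * ε := by
      rw [mul_comm (t ^ (1 - r)) ε]; exact h1
    exact lt_of_mul_lt_mul_left h2 htp.le
  set g : ℝ → X := fun t => limUnder atTop (fun n => f n t) with hgdef
  have hglim : ∀ t ∈ Set.Ioc (0:ℝ) T, Tendsto (fun n => f n t) atTop (𝓝 (g t)) :=
    fun t ht => (hgt t ht).tendsto_limUnder
  -- key uniform estimates for f m - g
  have key1 : ∀ ε > (0:ℝ), ∃ N : ℕ, ∀ m ≥ N, ∀ t ∈ Set.Ioc (0:ℝ) T,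
      t ^ (1 - r) * ‖f m t - g t‖ ≤ ε := by
    intro ε hε
    obtain ⟨N, hN⟩ := hcauchy ε hε
    refine ⟨N, fun m hm t ht => ?_⟩
    have hlim : Tendsto (fun n => t ^ (1 - r) * ‖f m t - f n t‖) atTop
        (𝓝 (t ^ (1 - r) * ‖f m t - g t‖)) :=
      ((tendsto_const_nhds.sub (hglim t ht)).norm).const_mul _
    refine le_of_tendsto hlim ?_
    filter_upwards [eventually_ge_atTop N] with n hn
    exact (hptN m n t ht).trans (hN m hm n hn).le
  have key2 : ∀ ε > (0:ℝ), ∃ N : ℕ, ∀ m ≥ N, ∀ s t : ℝ, 0 < s → s < t → t ≤ T →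
      s ^ (1 - r + β) * ‖(f m t - g t) - (f m s - g s)‖ / (t - s) ^ β ≤ ε := by
    intro ε hε
    obtain ⟨N, hN⟩ := hcauchy ε hε
    refine ⟨N, fun m hm s t hs hst htT => ?_⟩
    have hsIoc : s ∈ Set.Ioc (0:ℝ) T := ⟨hs, hst.le.trans htT⟩
    have htIoc : t ∈ Set.Ioc (0:ℝ) T := ⟨hs.trans hst, htT⟩
    have hlim : Tendsto
        (fun n => s ^ (1 - r + β) * ‖(f m t - f n t) - (f m s - f n s)‖ / (t - s) ^ β) atTop
        (𝓝 (s ^ (1 - r + β) * ‖(f m t - g t) - (f m s - g s)‖ / (t - s) ^ β)) := by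
      apply Tendsto.div_const
      exact (((tendsto_const_nhds.sub (hglim t htIoc)).sub
        (tendsto_const_nhds.sub (hglim s hsIoc))).norm).const_mul _
    refine le_of_tendsto hlim ?_
    filter_upwards [eventually_ge_atTop N] with n hn
    exact (hptH m n s t hs hst htT).trans (hN m hm n hn).le
  -- combined: Fnorm (f m - g) small
  have keyF : ∀ ε > (0:ℝ), ∃ N : ℕ, ∀ m ≥ N, Fnorm r β T (f m - g) ≤ 2 * ε := by
    intro ε hε
    obtain ⟨N1, hN1⟩ := key1 ε hε
    obtain ⟨N2, hN2⟩ := key2 ε hε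
    refine ⟨max N1 N2, fun m hm => ?_⟩
    have hA : sSup ((fun t : ℝ => t ^ (1 - r) * ‖(f m - g) t‖) '' Set.Ioc 0 T) ≤ ε := by
      apply Real.sSup_le ?_ hε.le
      rintro x ⟨t, ht, rfl⟩
      simpa only [Pi.sub_apply] using hN1 m (le_of_max_le_left hm) t ht
    have hB : sSup (holderQuotients r β T (f m - g)) ≤ ε := by
      apply Real.sSup_le ?_ hε.le
      rintro c ⟨s, t, hs, hst, htT, rfl⟩
      simpa only [Pi.sub_apply] using hN2 m (le_of_max_le_right hm) s t hs hst htT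
    have : Fnorm r β T (f m - g) = _ + _ := rfl
    rw [Fnorm]
    linarith
  refine ⟨g, ⟨?_, ?_, ?_, ?_⟩, ?_⟩
  · -- continuity of g on (0,T]
    intro t0 ht0
    have hc0 : (0:ℝ) < t0 / 2 := by linarith [ht0.1]
    have hct0 : t0 / 2 < t0 := by linarith [ht0.1]
    have hcT : t0 / 2 ≤ T := by linarith [ht0.2]
    have hsubset : Set.Icc (t0 / 2) T ⊆ Set.Ioc 0 T := fun x hx => ⟨hc0.trans_le hx.1, hx.2⟩
    have hunif : TendstoUniformlyOn (fun n t => f n t) g atTop (Set.Icc (t0 / 2) T) := by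
      rw [Metric.tendstoUniformlyOn_iff]
      intro ε hε
      have hcp : (0:ℝ) < (t0 / 2) ^ (1 - r) := Real.rpow_pos_of_pos hc0 _
      obtain ⟨N, hN⟩ := key1 (ε / 2 * (t0 / 2) ^ (1 - r)) (by positivity)
      filter_upwards [eventually_ge_atTop N] with n hn t ht
      have htIoc : t ∈ Set.Ioc (0:ℝ) T := hsubset ht
      have h1 := hN n hn t htIoc
      have h2 : (t0 / 2) ^ (1 - r) ≤ t ^ (1 - r) :=
        Real.rpow_le_rpow hc0.le ht.1 (by linarith)
      have h3 : ‖f n t - g t‖ ≤ ε / 2 := by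
        have h4 := mul_le_mul_of_nonneg_right h2 (norm_nonneg (f n t - g t))
        have h5 := h4.trans h1
        nlinarith
      rw [dist_eq_norm, norm_sub_rev]
      linarith
    have hcont : ContinuousOn g (Set.Icc (t0 / 2) T) :=
      hunif.continuousOn (Eventually.of_forall fun n => (hf n).1.mono hsubset).frequently
    have hmem : Set.Icc (t0 / 2) T ∈ 𝓝[Set.Ioc 0 T] t0 := by
      rw [mem_nhdsWithin]
      exact ⟨Set.Ioi (t0 / 2), isOpen_Ioi, hct0,
        fun x hx => ⟨le_of_lt hx.1, hx.2.2⟩⟩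
    exact (hcont t0 ⟨hct0.le, ht0.2⟩).mono_of_mem_nhdsWithin hmem
  · -- limit at 0
    choose l hl using fun n => (hf n).2.1
    have hlc : CauchySeq l := by
      rw [Metric.cauchySeq_iff]
      intro ε hε
      obtain ⟨N, hN⟩ := hcauchy ε hε
      refine ⟨N, fun m hm n hn => ?_⟩
      rw [dist_eq_norm]
      have hlim : Tendsto (fun t : ℝ => ‖t ^ (1 - r) • f m t - t ^ (1 - r) • f n t‖)
          (𝓝[>] (0:ℝ)) (𝓝 ‖l m - l n‖) := ((hl m).sub (hl n)).norm
      have hle : ‖l m - l n‖ ≤ Fnorm r β T (f m - f n) := by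
        refine le_of_tendsto hlim ?_
        filter_upwards [Ioo_mem_nhdsGT_of_mem (Set.left_mem_Ico.2 hT),
          self_mem_nhdsWithin] with t ht ht'
        have : ‖t ^ (1 - r) • f m t - t ^ (1 - r) • f n t‖
            = t ^ (1 - r) * ‖f m t - f n t‖ := by
          rw [← smul_sub, norm_smul, Real.norm_eq_abs,
            abs_of_nonneg (Real.rpow_nonneg (le_of_lt ht') _)]
        rw [this]
        exact hptN m n t ⟨ht', ht.2.le⟩
      exact hle.trans_lt (hN m hm n hn)
    obtain ⟨L, hL⟩ := cauchySeq_tendsto_of_complete hlc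
    refine ⟨L, ?_⟩
    rw [Metric.tendsto_nhdsWithin_nhds]
    intro ε hε
    obtain ⟨N1, hN1⟩ := key1 (ε / 4) (by linarith)
    rw [Metric.tendsto_atTop] at hL
    obtain ⟨N2, hN2⟩ := hL (ε / 4) (by linarith)
    set N := max N1 N2 with hNdef
    have h1 := hl N
    rw [Metric.tendsto_nhdsWithin_nhds] at h1
    obtain ⟨δ1, hδ1, hδ1h⟩ := h1 (ε / 4) (by linarith)
    refine ⟨min δ1 T, lt_min hδ1 hT, fun t ht hdt => ?_⟩
    have ht0 : 0 < t := ht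
    have htd : t < min δ1 T := by
      rwa [Real.dist_eq, sub_zero, abs_of_pos ht0] at hdt
    have htT : t ≤ T := (htd.trans_le (min_le_right _ _)).le
    have htδ1 : dist t 0 < δ1 := by
      rw [Real.dist_eq, sub_zero, abs_of_pos ht0]
      exact htd.trans_le (min_le_left _ _)
    have e1 : dist (t ^ (1 - r) • g t) (t ^ (1 - r) • f N t) ≤ ε / 4 := by
      rw [dist_eq_norm, ← smul_sub, norm_smul, Real.norm_eq_abs,
        abs_of_nonneg (Real.rpow_nonneg ht0.le _), norm_sub_rev]
      exact hN1 N (le_max_left _ _) t ⟨ht0, htT⟩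
    have e2 : dist (t ^ (1 - r) • f N t) (l N) < ε / 4 := hδ1h ht htδ1
    have e3 : dist (l N) L < ε / 4 := hN2 N (le_max_right _ _)
    calc dist (t ^ (1 - r) • g t) L
        ≤ dist (t ^ (1 - r) • g t) (t ^ (1 - r) • f N t)
          + dist (t ^ (1 - r) • f N t) (l N) + dist (l N) L := dist_triangle4 _ _ _ _
      _ < ε := by linarith
  · -- BddAbove holderQuotients g
    obtain ⟨N, hN⟩ := key2 1 one_pos
    refine ⟨sSup (holderQuotients r β T (f N)) + 1, ?_⟩
    rintro c ⟨s, t, hs, hst, htT, rfl⟩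
    have hd : (0:ℝ) < (t - s) ^ β := Real.rpow_pos_of_pos (by linarith) _
    have hp : (0:ℝ) ≤ s ^ (1 - r + β) := Real.rpow_nonneg hs.le _
    have htri : ‖g t - g s‖ ≤ ‖f N t - f N s‖ + ‖(f N t - g t) - (f N s - g s)‖ := by
      have heq : g t - g s = (f N t - f N s) - ((f N t - g t) - (f N s - g s)) := by abel
      rw [heq]
      exact norm_sub_le _ _
    calc s ^ (1 - r + β) * ‖g t - g s‖ / (t - s) ^ β
        ≤ s ^ (1 - r + β) * ‖f N t - f N s‖ / (t - s) ^ β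
          + s ^ (1 - r + β) * ‖(f N t - g t) - (f N s - g s)‖ / (t - s) ^ β :=
          quot_tri hp hd htri
      _ ≤ sSup (holderQuotients r β T (f N)) + 1 :=
          add_le_add (le_csSup (hf N).2.2.1 ⟨s, t, hs, hst, htT, rfl⟩)
            (hN N le_rfl s t hs hst htT)
  · -- tendsto sSup hQ t' g → 0
    rw [Metric.tendsto_nhdsWithin_nhds]
    intro ε hε
    obtain ⟨N, hN⟩ := key2 (ε / 3) (by linarith)
    have h4 := (hf N).2.2.2
    rw [Metric.tendsto_nhdsWithin_nhds] at h4
    obtain ⟨δ1, hδ1, hδ1h⟩ := h4 (ε / 3) (by linarith)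
    refine ⟨min δ1 T, lt_min hδ1 hT, fun t' ht' hdt' => ?_⟩
    have ht'0 : 0 < t' := ht'
    have ht'd : t' < min δ1 T := by
      rwa [Real.dist_eq, sub_zero, abs_of_pos ht'0] at hdt'
    have ht'T : t' ≤ T := (ht'd.trans_le (min_le_right _ _)).le
    have ht'δ1 : dist t' 0 < δ1 := by
      rw [Real.dist_eq, sub_zero, abs_of_pos ht'0]
      exact ht'd.trans_le (min_le_left _ _)
    have hsupN : sSup (holderQuotients r β t' (f N)) < ε / 3 := by
      have := hδ1h ht' ht'δ1
      rw [Real.dist_eq, sub_zero] at this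
      exact (le_abs_self _).trans_lt this
    have hbN : BddAbove (holderQuotients r β t' (f N)) :=
      (hf N).2.2.1.mono (hQ_mono r β ht'T (f N))
    have hle : sSup (holderQuotients r β t' g)
        ≤ sSup (holderQuotients r β t' (f N)) + ε / 3 := by
      apply Real.sSup_le
      · rintro c ⟨s, t, hs, hst, htt', rfl⟩
        have hd : (0:ℝ) < (t - s) ^ β := Real.rpow_pos_of_pos (by linarith) _
        have hp : (0:ℝ) ≤ s ^ (1 - r + β) := Real.rpow_nonneg hs.le _
        have htri : ‖g t - g s‖ ≤ ‖f N t - f N s‖ + ‖(f N t - g t) - (f N s - g s)‖ := by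
          have heq : g t - g s = (f N t - f N s) - ((f N t - g t) - (f N s - g s)) := by abel
          rw [heq]
          exact norm_sub_le _ _
        calc s ^ (1 - r + β) * ‖g t - g s‖ / (t - s) ^ β
            ≤ s ^ (1 - r + β) * ‖f N t - f N s‖ / (t - s) ^ β
              + s ^ (1 - r + β) * ‖(f N t - g t) - (f N s - g s)‖ / (t - s) ^ β :=
              quot_tri hp hd htri
          _ ≤ _ := add_le_add (le_csSup hbN ⟨s, t, hs, hst, htt', rfl⟩)
              (hN N le_rfl s t hs hst (htt'.trans ht'T))
      · exact add_nonneg (Real.sSup_nonneg (hQ_nonneg r β t' (f N))) (by linarith)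
    rw [Real.dist_eq, sub_zero, abs_of_nonneg (Real.sSup_nonneg (hQ_nonneg r β t' g))]
    calc sSup (holderQuotients r β t' g)
        ≤ sSup (holderQuotients r β t' (f N)) + ε / 3 := hle
      _ < ε / 3 + ε / 3 := by linarith
      _ < ε := by linarith
  · -- convergence in Fnorm
    rw [Metric.tendsto_atTop]
    intro ε hε
    obtain ⟨N, hN⟩ := keyF (ε / 3) (by linarith)
    refine ⟨N, fun n hn => ?_⟩
    rw [Real.dist_eq, sub_zero, abs_of_nonneg (Fnorm_nonneg r β T _)]
    have := hN n hn
    linarith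
end

section
/- Let X be a Banach space, T > 0, 0 < β < r < 1, and 0 < σ ≤ 1. If g ∈ C^σ([0,T];X) with g(0) = 0, and f(t) := t^{r-1} g(t) for t ∈ (0,T], then f ∈ F^{r,σ}((0,T];X) whenever σ < r, in particular f satisfies lim_{t→0} t^{1-r} f(t) = 0 and sup_{0<s<t≤T} s^{1-r+σ}‖f(t)-f(s)‖/(t-s)^σ < ∞. -/
open MeasureTheory Set Filter Topology
/-- Bernoulli-type estimate: for `r < 1` and `0 < s ≤ t`,
`s^(r-1) - t^(r-1) ≤ (1-r) * s^(r-2) * (t-s)`. -/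
lemma aux_bernoulli {r s t : ℝ} (hr0 : 0 < r) (hr1 : r < 1) (hs : 0 < s) (hst : s ≤ t) :
    s ^ (r - 1) - t ^ (r - 1) ≤ (1 - r) * s ^ (r - 2) * (t - s) := by
  have ht : 0 < t := lt_of_lt_of_le hs hst
  set x := t / s with hxdef
  have hx1 : 1 ≤ x := (one_le_div hs).mpr hst
  have hx0 : 0 < x := lt_of_lt_of_le one_pos hx1
  set u := (1 - r) * (x - 1) with hudef
  have hu0 : 0 ≤ u := mul_nonneg (by linarith) (by linarith)
  -- Bernoulli: x^(1-r) ≤ 1 + u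
  have hbern : x ^ (1 - r) ≤ 1 + u := by
    have := rpow_one_add_le_one_add_mul_self (s := x - 1) (by linarith)
      (p := 1 - r) (by linarith) (by linarith)
    have hx : 1 + (x - 1) = x := by ring
    rw [hx] at this
    simpa [hudef, mul_comm] using this
  have hA0 : 0 < x ^ (1 - r) := Real.rpow_pos_of_pos hx0 _
  -- hence 1 - u ≤ x^(r-1)
  have hkey : 1 - u ≤ x ^ (r - 1) := by
    have hx' : x ^ (r - 1) = (x ^ (1 - r))⁻¹ := by
      rw [show r - 1 = -(1 - r) by ring, Real.rpow_neg hx0.le]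
    have hmul : (1 - u) * x ^ (1 - r) ≤ 1 := by nlinarith [sq_nonneg u]
    rw [hx', ← one_div]
    exact (le_div_iff₀ hA0).mpr hmul
  -- convert back
  have hts : t ^ (r - 1) = s ^ (r - 1) * x ^ (r - 1) := by
    rw [hxdef, Real.div_rpow ht.le hs.le, mul_div_cancel₀]
    exact (Real.rpow_pos_of_pos hs _).ne'
  have hsp : 0 < s ^ (r - 1) := Real.rpow_pos_of_pos hs _
  have h2 : s ^ (r - 1) * (1 - u) ≤ t ^ (r - 1) := by
    rw [hts]
    exact mul_le_mul_of_nonneg_left hkey hsp.le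
  have hs2 : s ^ (r - 2) * s = s ^ (r - 1) := by
    rw [show r - 1 = (r - 2) + 1 by ring, Real.rpow_add_one hs.ne']
  have hux : s ^ (r - 1) * u = (1 - r) * s ^ (r - 2) * (t - s) := by
    rw [hudef, hxdef]
    rw [← hs2]
    field_simp
  nlinarith [h2]

/-- Interpolated estimate: `s^(r-1) - t^(r-1) ≤ s^(r-1-σ) * (t-s)^σ`. -/
lemma aux_d {r σ s t : ℝ} (hr0 : 0 < r) (hr1 : r < 1) (hσ0 : 0 < σ) (hσ1 : σ ≤ 1)
    (hs : 0 < s) (hst : s < t) :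
    s ^ (r - 1) - t ^ (r - 1) ≤ s ^ (r - 1 - σ) * (t - s) ^ σ := by
  have ht : 0 < t := hs.trans hst
  have hts : 0 < t - s := by linarith
  rcases le_or_gt (t - s) s with hcase | hcase
  · -- t - s ≤ s : use the Bernoulli estimate
    have h1 := aux_bernoulli hr0 hr1 hs hst.le
    have hsplit : (t - s) = (t - s) ^ (1 - σ) * (t - s) ^ σ := by
      rw [← Real.rpow_add hts]; norm_num
    have h2 : (t - s) ^ (1 - σ) ≤ s ^ (1 - σ) :=
      Real.rpow_le_rpow hts.le hcase (by linarith)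
    have hsp2 : (0:ℝ) ≤ s ^ (r - 2) := (Real.rpow_pos_of_pos hs _).le
    have htσ : (0:ℝ) ≤ (t - s) ^ σ := (Real.rpow_pos_of_pos hts _).le
    have htσ1 : (0:ℝ) ≤ (t - s) ^ (1 - σ) := (Real.rpow_pos_of_pos hts _).le
    have h4 : s ^ (r - 2) * s ^ (1 - σ) = s ^ (r - 1 - σ) := by
      rw [← Real.rpow_add hs]; ring_nf
    have b1 : (1 - r) * s ^ (r - 2) * (t - s) ^ (1 - σ) ≤ s ^ (r - 1 - σ) := by
      have hA : (1 - r) * s ^ (r - 2) ≤ s ^ (r - 2) := by nlinarith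
      calc (1 - r) * s ^ (r - 2) * (t - s) ^ (1 - σ)
          ≤ s ^ (r - 2) * (t - s) ^ (1 - σ) := mul_le_mul_of_nonneg_right hA htσ1
        _ ≤ s ^ (r - 2) * s ^ (1 - σ) := mul_le_mul_of_nonneg_left h2 hsp2
        _ = s ^ (r - 1 - σ) := h4
    have h3 : (1 - r) * s ^ (r - 2) * (t - s) ≤ s ^ (r - 1 - σ) * (t - s) ^ σ := by
      calc (1 - r) * s ^ (r - 2) * (t - s)
          = (1 - r) * s ^ (r - 2) * (t - s) ^ (1 - σ) * (t - s) ^ σ := by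
            conv_lhs => rw [hsplit]
            ring
        _ ≤ s ^ (r - 1 - σ) * (t - s) ^ σ := mul_le_mul_of_nonneg_right b1 htσ
    linarith
  · -- s < t - s : use the trivial estimate
    have h1 : s ^ (r - 1) - t ^ (r - 1) ≤ s ^ (r - 1) := by
      have := (Real.rpow_pos_of_pos ht (r - 1)).le
      linarith
    have h2 : s ^ σ ≤ (t - s) ^ σ := Real.rpow_le_rpow hs.le hcase.le hσ0.le
    have h3 : s ^ (r - 1) = s ^ (r - 1 - σ) * s ^ σ := by
      rw [← Real.rpow_add hs]; ring_nf
    calc s ^ (r - 1) - t ^ (r - 1) ≤ s ^ (r - 1 - σ) * s ^ σ := by rw [← h3]; exact h1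
      _ ≤ s ^ (r - 1 - σ) * (t - s) ^ σ :=
          mul_le_mul_of_nonneg_left h2 (Real.rpow_pos_of_pos hs _).le

/-- Main pointwise bound on the weighted Hölder quotient. -/
lemma aux_quot {X : Type*} [NormedAddCommGroup X] [NormedSpace ℝ X]
    {r σ T C : ℝ} (hr0 : 0 < r) (hr1 : r < 1) (hσ0 : 0 < σ) (hσ1 : σ ≤ 1) (hC : 0 ≤ C)
    {g : ℝ → X} (hg0 : g 0 = 0)
    (hholder : ∀ s ∈ Set.Icc (0:ℝ) T, ∀ t ∈ Set.Icc (0:ℝ) T,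
      ‖g t - g s‖ ≤ C * |t - s| ^ σ)
    {s t : ℝ} (hs : 0 < s) (hst : s < t) (htT : t ≤ T) :
    s ^ (1 - r + σ) * ‖t ^ (r - 1) • g t - s ^ (r - 1) • g s‖ / (t - s) ^ σ
      ≤ 2 * C * s ^ σ := by
  have ht : 0 < t := hs.trans hst
  have hts : 0 < t - s := by linarith
  have hsT : s ∈ Set.Icc (0:ℝ) T := ⟨hs.le, le_trans hst.le htT⟩
  have htT' : t ∈ Set.Icc (0:ℝ) T := ⟨ht.le, htT⟩
  have h0T : (0:ℝ) ∈ Set.Icc (0:ℝ) T := ⟨le_refl _, le_trans hs.le (le_trans hst.le htT)⟩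
  have hg1 : ‖g t - g s‖ ≤ C * (t - s) ^ σ := by
    have := hholder s hsT t htT'
    rwa [abs_of_pos hts] at this
  have hg2 : ‖g s‖ ≤ C * s ^ σ := by
    have := hholder 0 h0T s hsT
    rw [hg0, sub_zero, sub_zero, abs_of_pos hs] at this
    exact this
  have hd : t ^ (r - 1) • g t - s ^ (r - 1) • g s
      = t ^ (r - 1) • (g t - g s) + (t ^ (r - 1) - s ^ (r - 1)) • g s := by
    rw [smul_sub, sub_smul]; abel
  have htp : 0 < t ^ (r - 1) := Real.rpow_pos_of_pos ht _
  have hsp : 0 < s ^ (r - 1) := Real.rpow_pos_of_pos hs _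
  have hmono : t ^ (r - 1) ≤ s ^ (r - 1) :=
    Real.rpow_le_rpow_of_nonpos hs hst.le (by linarith)
  have hdd : |t ^ (r - 1) - s ^ (r - 1)| = s ^ (r - 1) - t ^ (r - 1) := by
    rw [abs_of_nonpos (by linarith)]; ring
  have hnorm : ‖t ^ (r - 1) • g t - s ^ (r - 1) • g s‖
      ≤ 2 * C * (s ^ (r - 1) * (t - s) ^ σ) := by
    rw [hd]
    have h1 : ‖t ^ (r - 1) • (g t - g s)‖ ≤ s ^ (r - 1) * (C * (t - s) ^ σ) := by
      rw [norm_smul, Real.norm_eq_abs, abs_of_pos htp]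
      calc t ^ (r - 1) * ‖g t - g s‖ ≤ t ^ (r - 1) * (C * (t - s) ^ σ) :=
            mul_le_mul_of_nonneg_left hg1 htp.le
        _ ≤ s ^ (r - 1) * (C * (t - s) ^ σ) :=
            mul_le_mul_of_nonneg_right hmono
              (mul_nonneg hC (Real.rpow_pos_of_pos hts _).le)
    have h2 : ‖(t ^ (r - 1) - s ^ (r - 1)) • g s‖ ≤ s ^ (r - 1) * (C * (t - s) ^ σ) := by
      rw [norm_smul, Real.norm_eq_abs, hdd]
      have hD := aux_d hr0 hr1 hσ0 hσ1 hs hst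
      have hD0 : 0 ≤ s ^ (r - 1) - t ^ (r - 1) := by linarith
      calc (s ^ (r - 1) - t ^ (r - 1)) * ‖g s‖
          ≤ (s ^ (r - 1 - σ) * (t - s) ^ σ) * (C * s ^ σ) := by
            apply mul_le_mul hD hg2 (norm_nonneg _)
            exact mul_nonneg (Real.rpow_pos_of_pos hs _).le (Real.rpow_pos_of_pos hts _).le
        _ = (s ^ (r - 1 - σ) * s ^ σ) * (C * (t - s) ^ σ) := by ring
        _ = s ^ (r - 1) * (C * (t - s) ^ σ) := by
            rw [← Real.rpow_add hs]; ring_nf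
    calc ‖t ^ (r - 1) • (g t - g s) + (t ^ (r - 1) - s ^ (r - 1)) • g s‖
        ≤ ‖t ^ (r - 1) • (g t - g s)‖ + ‖(t ^ (r - 1) - s ^ (r - 1)) • g s‖ := norm_add_le _ _
      _ ≤ s ^ (r - 1) * (C * (t - s) ^ σ) + s ^ (r - 1) * (C * (t - s) ^ σ) :=
          add_le_add h1 h2
      _ = 2 * C * (s ^ (r - 1) * (t - s) ^ σ) := by ring
  have htsp : 0 < (t - s) ^ σ := Real.rpow_pos_of_pos hts _
  rw [div_le_iff₀ htsp]
  have hkey : s ^ (1 - r + σ) * (2 * C * (s ^ (r - 1) * (t - s) ^ σ))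
      = 2 * C * s ^ σ * (t - s) ^ σ := by
    have : s ^ (1 - r + σ) * s ^ (r - 1) = s ^ σ := by
      rw [← Real.rpow_add hs]; ring_nf
    calc s ^ (1 - r + σ) * (2 * C * (s ^ (r - 1) * (t - s) ^ σ))
        = 2 * C * (s ^ (1 - r + σ) * s ^ (r - 1)) * (t - s) ^ σ := by ring
      _ = 2 * C * s ^ σ * (t - s) ^ σ := by rw [this]
  calc s ^ (1 - r + σ) * ‖t ^ (r - 1) • g t - s ^ (r - 1) • g s‖
      ≤ s ^ (1 - r + σ) * (2 * C * (s ^ (r - 1) * (t - s) ^ σ)) :=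
        mul_le_mul_of_nonneg_left hnorm (Real.rpow_pos_of_pos hs _).le
    _ = 2 * C * s ^ σ * (t - s) ^ σ := hkey

lemma aux_tendsto_rpow (σ C : ℝ) (hσ0 : 0 < σ) :
    Tendsto (fun t : ℝ => C * t ^ σ) (𝓝[>] (0:ℝ)) (𝓝 0) := by
  have h1 : Tendsto (fun t : ℝ => t ^ σ) (𝓝 (0:ℝ)) (𝓝 0) := by
    have := (Real.continuousAt_rpow_const 0 σ (Or.inr hσ0.le)).tendsto
    rwa [Real.zero_rpow hσ0.ne'] at this
  have h2 : Tendsto (fun t : ℝ => C * t ^ σ) (𝓝 (0:ℝ)) (𝓝 (C * 0)) := h1.const_mul C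
  have h3 := h2.mono_left (nhdsWithin_le_nhds (s := Set.Ioi (0:ℝ)))
  simpa using h3

/-- If `g` is σ-Hölder on `[0,T]` with `g 0 = 0` and `σ < r`, then
`f t = t^(r-1) • g t` belongs to `F^{r,σ}((0,T];X)`; in particular
`t^(1-r) • f t → 0` as `t → 0` and the weighted Hölder seminorm is finite. -/
theorem holder_weighted_mem {X : Type*} [NormedAddCommGroup X] [NormedSpace ℝ X]
    (r σ T C : ℝ) (hr0 : 0 < r) (hr1 : r < 1) (hσ0 : 0 < σ) (hσ1 : σ ≤ 1)
    (hσr : σ < r) (hT : 0 < T)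
    (g : ℝ → X) (hg0 : g 0 = 0)
    (hholder : ∀ s ∈ Set.Icc (0:ℝ) T, ∀ t ∈ Set.Icc (0:ℝ) T,
      ‖g t - g s‖ ≤ C * |t - s| ^ σ) :
    MemF r σ T (fun t : ℝ => t ^ (r - 1) • g t) ∧
    Tendsto (fun t : ℝ => t ^ (1 - r) • (t ^ (r - 1) • g t)) (𝓝[>] (0:ℝ)) (𝓝 0) ∧
    BddAbove (holderQuotients r σ T (fun t : ℝ => t ^ (r - 1) • g t)) := by
  -- C is nonnegative
  have hC : 0 ≤ C := by
    have := hholder 0 ⟨le_refl _, hT.le⟩ T ⟨hT.le, le_refl _⟩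
    have hn : (0:ℝ) ≤ C * |T - 0| ^ σ := le_trans (norm_nonneg _) this
    have hTp : 0 < |T - 0| ^ σ := Real.rpow_pos_of_pos (by rw [sub_zero, abs_of_pos hT]; exact hT) _
    nlinarith
  -- continuity of g on [0, T]
  have hgc : ContinuousOn g (Set.Icc 0 T) := by
    intro x hx
    have hb : Tendsto (fun t : ℝ => C * |t - x| ^ σ) (𝓝[Set.Icc 0 T] x) (𝓝 0) := by
      have h1 : Tendsto (fun t : ℝ => |t - x|) (𝓝 x) (𝓝 0) := by
        have h0 : Tendsto (fun t : ℝ => t - x) (𝓝 x) (𝓝 (x - x)) :=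
          (continuous_id.sub continuous_const).tendsto x
        rw [sub_self] at h0
        have := h0.abs
        rwa [abs_zero] at this
      have h2 : Tendsto (fun y : ℝ => C * y ^ σ) (𝓝 (0:ℝ)) (𝓝 0) := by
        have := (Real.continuousAt_rpow_const 0 σ (Or.inr hσ0.le)).tendsto
        rw [Real.zero_rpow hσ0.ne'] at this
        simpa using this.const_mul C
      exact (h2.comp h1).mono_left nhdsWithin_le_nhds
    have hsq : Tendsto (fun t => g t - g x) (𝓝[Set.Icc 0 T] x) (𝓝 0) := by
      apply squeeze_zero_norm' _ hb
      filter_upwards [eventually_mem_nhdsWithin] with t ht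
      have := hholder x hx t ht
      simpa using this
    have : Tendsto g (𝓝[Set.Icc 0 T] x) (𝓝 (g x)) := by
      have := hsq.add_const (g x)
      simpa using this
    exact this
  -- tendsto of g at 0 from the right
  have hgt0 : Tendsto g (𝓝[>] (0:ℝ)) (𝓝 0) := by
    apply squeeze_zero_norm' _ (aux_tendsto_rpow σ C hσ0)
    filter_upwards [Ioc_mem_nhdsGT_of_mem (Set.mem_Ico.mpr ⟨le_refl (0:ℝ), hT⟩)] with t ht
    have := hholder 0 ⟨le_refl _, hT.le⟩ t ⟨ht.1.le, ht.2⟩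
    rw [hg0, sub_zero, sub_zero, abs_of_pos ht.1] at this
    exact this
  -- the limit of t^(1-r) • f t
  have htend : Tendsto (fun t : ℝ => t ^ (1 - r) • (t ^ (r - 1) • g t))
      (𝓝[>] (0:ℝ)) (𝓝 0) := by
    apply Tendsto.congr' _ hgt0
    filter_upwards [self_mem_nhdsWithin] with t (ht : (0:ℝ) < t)
    rw [smul_smul, ← Real.rpow_add ht]
    norm_num
  -- pointwise quotient bound packaged
  have hquot : ∀ c ∈ holderQuotients r σ T (fun t : ℝ => t ^ (r - 1) • g t),
      c ≤ 2 * C * T ^ σ := by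
    rintro c ⟨s, t, hs, hst, htT, rfl⟩
    have h1 := aux_quot hr0 hr1 hσ0 hσ1 hC hg0 hholder hs hst htT
    have h2 : s ^ σ ≤ T ^ σ :=
      Real.rpow_le_rpow hs.le (le_trans hst.le htT) hσ0.le
    calc s ^ (1 - r + σ) * ‖(fun t : ℝ => t ^ (r - 1) • g t) t
            - (fun t : ℝ => t ^ (r - 1) • g t) s‖ / (t - s) ^ σ
        ≤ 2 * C * s ^ σ := h1
      _ ≤ 2 * C * T ^ σ := mul_le_mul_of_nonneg_left h2 (by linarith)
  have hbdd : BddAbove (holderQuotients r σ T (fun t : ℝ => t ^ (r - 1) • g t)) :=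
    ⟨2 * C * T ^ σ, hquot⟩
  -- nonnegativity of quotients
  have hnonneg : ∀ T' : ℝ, ∀ c ∈ holderQuotients r σ T' (fun t : ℝ => t ^ (r - 1) • g t),
      0 ≤ c := by
    rintro T' c ⟨s, t, hs, hst, htT, rfl⟩
    apply div_nonneg
    · exact mul_nonneg (Real.rpow_nonneg hs.le _) (norm_nonneg _)
    · exact Real.rpow_nonneg (by linarith) _
  -- tendsto of sSup of quotients
  have hsup : Tendsto (fun t' : ℝ => sSup (holderQuotients r σ t'
      (fun t : ℝ => t ^ (r - 1) • g t))) (𝓝[>] (0:ℝ)) (𝓝 0) := by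
    apply squeeze_zero' (Eventually.of_forall fun t' => Real.sSup_nonneg (hnonneg t'))
      _ (aux_tendsto_rpow σ (2 * C) hσ0)
    filter_upwards [Ioc_mem_nhdsGT_of_mem (Set.mem_Ico.mpr ⟨le_refl (0:ℝ), hT⟩)] with t' ht'
    apply Real.sSup_le _ (mul_nonneg (by linarith) (Real.rpow_nonneg ht'.1.le _))
    rintro c ⟨s, t, hs, hst, htT', rfl⟩
    have h1 := aux_quot hr0 hr1 hσ0 hσ1 hC hg0 hholder hs hst (le_trans htT' ht'.2)
    have h2 : s ^ σ ≤ t' ^ σ :=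
      Real.rpow_le_rpow hs.le (le_trans hst.le htT') hσ0.le
    calc s ^ (1 - r + σ) * ‖(fun t : ℝ => t ^ (r - 1) • g t) t
            - (fun t : ℝ => t ^ (r - 1) • g t) s‖ / (t - s) ^ σ
        ≤ 2 * C * s ^ σ := h1
      _ ≤ 2 * C * t' ^ σ := mul_le_mul_of_nonneg_left h2 (by linarith)
  -- continuity of f on (0, T]
  have hfc : ContinuousOn (fun t : ℝ => t ^ (r - 1) • g t) (Set.Ioc 0 T) := by
    apply ContinuousOn.smul
    · intro x hx
      exact (Real.continuousAt_rpow_const x (r - 1) (Or.inl hx.1.ne')).continuousWithinAt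
    · exact hgc.mono Set.Ioc_subset_Icc_self
  exact ⟨⟨hfc, ⟨0, htend⟩, hbdd, hsup⟩, htend, hbdd⟩
end

section
/- For 0 < σ < α < 1 and T > 0, the function f(τ) = τ^{α-1} belongs to F^{α-σ,σ}((0,T];ℝ); that is, lim_{t→0} t^{1-(α-σ)} t^{α-1} = lim_{t→0} t^σ = 0 exists, and sup_{0<s<t≤T} s^{1-(α-σ)+σ} |t^{α-1} - s^{α-1}| / (t-s)^σ < ∞, with this supremum over pairs s<t<t' tending to 0 as t' → 0. -/
open MeasureTheory Set Filter Topology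
/-- Bernoulli's inequality for exponents in `[-1, 0]`. -/
lemma bernoulli_neg {y p : ℝ} (hy : 0 ≤ y) (hp1 : -1 ≤ p) (hp2 : p ≤ 0) :
    1 + p * y ≤ (1 + y) ^ p := by
  have hy1 : (0:ℝ) < 1 + y := by linarith
  by_cases hc : 1 + p * y ≤ 0
  · exact hc.trans (Real.rpow_pos_of_pos hy1 p).le
  push_neg at hc
  have hB : (1 + y) ^ (-p) ≤ 1 + (-p) * y :=
    rpow_one_add_le_one_add_mul_self (by linarith) (by linarith) (by linarith)
  have hqpos : 0 < (1 + y) ^ (-p) := Real.rpow_pos_of_pos hy1 (-p)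
  rw [← neg_neg p, Real.rpow_neg hy1.le, ← one_div, le_div_iff₀ hqpos]
  nlinarith [hB, mul_nonneg (mul_nonneg (neg_nonneg.2 hp2) hy) (mul_nonneg (neg_nonneg.2 hp2) hy)]

/-- Mean-value type estimate for `x ↦ x^(α-1)`. -/
lemma diff_le {α : ℝ} (hα0 : 0 < α) (hα1 : α < 1) {s t : ℝ} (hs : 0 < s) (hst : s < t) :
    s ^ (α - 1) - t ^ (α - 1) ≤ (1 - α) * s ^ (α - 2) * (t - s) := by
  have ht : 0 < t := hs.trans hst
  have hb : 1 + (α - 1) * (t / s - 1) ≤ (1 + (t / s - 1)) ^ (α - 1) :=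
    bernoulli_neg (by rw [sub_nonneg, le_div_iff₀ hs]; linarith) (by linarith) (by linarith)
  rw [add_sub_cancel] at hb
  -- multiply by s ^ (α - 1) > 0
  have hsp : (0:ℝ) < s ^ (α - 1) := Real.rpow_pos_of_pos hs _
  have hmul : (1 + (α - 1) * (t / s - 1)) * s ^ (α - 1) ≤ (t / s) ^ (α - 1) * s ^ (α - 1) :=
    mul_le_mul_of_nonneg_right hb hsp.le
  have hdiv : (t / s) ^ (α - 1) * s ^ (α - 1) = t ^ (α - 1) := by
    rw [Real.div_rpow ht.le hs.le, div_mul_cancel₀]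
    exact hsp.ne'
  rw [hdiv] at hmul
  have hs2 : s ^ (α - 1) = s ^ (α - 2) * s := by
    rw [← Real.rpow_add_one hs.ne' (α - 2)]; ring_nf
  have hexp : (1 + (α - 1) * (t / s - 1)) * s ^ (α - 1)
      = s ^ (α - 1) - (1 - α) * s ^ (α - 2) * (t - s) := by
    rw [hs2]
    field_simp
    ring
  rw [hexp] at hmul
  linarith

/-- The key bound on the weighted Hölder quotient. -/
lemma quot_le {α σ : ℝ} (hσ : 0 < σ) (hσα : σ < α) (hα : α < 1)
    {s t : ℝ} (hs : 0 < s) (hst : s < t) :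
    s ^ (1 - (α - σ) + σ) * |t ^ (α - 1) - s ^ (α - 1)| / (t - s) ^ σ ≤ s ^ σ := by
  have ht : 0 < t := hs.trans hst
  have hα0 : 0 < α := hσ.trans hσα
  have hts : 0 < t - s := by linarith
  set D : ℝ := s ^ (α - 1) - t ^ (α - 1) with hD
  have hDpos : 0 < D := by
    have := Real.rpow_lt_rpow_of_neg hs hst (by linarith : α - 1 < 0)
    simpa [hD, sub_pos] using this
  have habs : |t ^ (α - 1) - s ^ (α - 1)| = D := by
    rw [abs_sub_comm, abs_of_pos hDpos]
  have hA : D ≤ (1 - α) * s ^ (α - 2) * (t - s) := diff_le hα0 hα hs hst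
  have hB : D ≤ s ^ (α - 1) := by
    have : (0:ℝ) < t ^ (α - 1) := Real.rpow_pos_of_pos ht _
    simp only [hD]; linarith
  have hAnn : (0:ℝ) ≤ (1 - α) * s ^ (α - 2) * (t - s) := hDpos.le.trans hA
  -- interpolation : D = D^σ * D^(1-σ)
  have hDsplit : D = D ^ σ * D ^ (1 - σ) := by
    rw [← Real.rpow_add hDpos]; norm_num
  have hint : D ≤ ((1 - α) * s ^ (α - 2) * (t - s)) ^ σ * (s ^ (α - 1)) ^ (1 - σ) := by
    rw [hDsplit]
    exact mul_le_mul (Real.rpow_le_rpow hDpos.le hA hσ.le)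
      (Real.rpow_le_rpow hDpos.le hB (by linarith))
      (Real.rpow_nonneg hDpos.le _) (Real.rpow_nonneg hAnn _)
  -- expand the right-hand side
  have h1α : (0:ℝ) < 1 - α := by linarith
  have hrhs : ((1 - α) * s ^ (α - 2) * (t - s)) ^ σ * (s ^ (α - 1)) ^ (1 - σ)
      = (1 - α) ^ σ * (t - s) ^ σ * s ^ (α - 1 - σ) := by
    rw [Real.mul_rpow (mul_nonneg h1α.le (Real.rpow_nonneg hs.le _)) hts.le,
        Real.mul_rpow h1α.le (Real.rpow_nonneg hs.le _),
        ← Real.rpow_mul hs.le, ← Real.rpow_mul hs.le,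
        show α - 1 - σ = (α - 2) * σ + (α - 1) * (1 - σ) by ring, Real.rpow_add hs]
    ring
  have hDle : D ≤ (1 - α) ^ σ * (t - s) ^ σ * s ^ (α - 1 - σ) := hrhs ▸ hint
  have hts' : ((t - s) : ℝ) ^ σ ≠ 0 := (Real.rpow_pos_of_pos hts σ).ne'
  have hss : s ^ (1 - (α - σ) + σ) * s ^ (α - 1 - σ) = s ^ σ := by
    rw [← Real.rpow_add hs]; ring_nf
  rw [habs]
  calc s ^ (1 - (α - σ) + σ) * D / (t - s) ^ σ
      ≤ s ^ (1 - (α - σ) + σ) * ((1 - α) ^ σ * (t - s) ^ σ * s ^ (α - 1 - σ)) / (t - s) ^ σ := by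
        gcongr
    _ = (1 - α) ^ σ * (s ^ (1 - (α - σ) + σ) * s ^ (α - 1 - σ)) * ((t - s) ^ σ / (t - s) ^ σ) := by
        ring
    _ = (1 - α) ^ σ * s ^ σ := by rw [hss, div_self hts', mul_one]
    _ ≤ 1 * s ^ σ := by
        gcongr
        exact Real.rpow_le_one (by linarith) (by linarith) hσ.le
    _ = s ^ σ := one_mul _

/-- For `0 < σ < α < 1`, the function `τ ↦ τ^(α-1)` belongs to
`F^{α-σ,σ}((0,T];ℝ)`, and `t^(1-(α-σ)) * t^(α-1) = t^σ → 0` as `t → 0`. -/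
theorem rpow_mem_F (α σ T : ℝ) (hσ : 0 < σ) (hσα : σ < α) (hα : α < 1) (hT : 0 < T) :
    MemF (α - σ) σ T (fun τ : ℝ => τ ^ (α - 1)) ∧
    Tendsto (fun t : ℝ => t ^ (1 - (α - σ)) • (t ^ (α - 1)))
      (𝓝[>] (0:ℝ)) (𝓝 (0:ℝ)) := by
  have hσ0 : Tendsto (fun t : ℝ => t ^ σ) (𝓝[>] (0:ℝ)) (𝓝 0) := by
    have h := (Real.continuousAt_rpow_const 0 σ (Or.inr hσ.le)).tendsto
    rw [Real.zero_rpow hσ.ne'] at h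
    exact h.mono_left nhdsWithin_le_nhds
  have hlim : Tendsto (fun t : ℝ => t ^ (1 - (α - σ)) • (t ^ (α - 1)))
      (𝓝[>] (0:ℝ)) (𝓝 (0:ℝ)) := by
    apply hσ0.congr'
    filter_upwards [self_mem_nhdsWithin] with t ht
    have ht0 : (0:ℝ) < t := ht
    rw [smul_eq_mul, ← Real.rpow_add ht0]
    congr 1; ring
  have hnn : ∀ t' : ℝ, ∀ c ∈ holderQuotients (α - σ) σ t' (fun τ : ℝ => τ ^ (α - 1)),
      0 ≤ c := by
    rintro t' c ⟨s, t, hs, hst, _, rfl⟩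
    exact div_nonneg (mul_nonneg (Real.rpow_nonneg hs.le _) (norm_nonneg _))
      (Real.rpow_nonneg (by linarith) _)
  have hquot : ∀ {s t : ℝ}, 0 < s → s < t →
      s ^ (1 - (α - σ) + σ) * ‖t ^ (α - 1) - s ^ (α - 1)‖ / (t - s) ^ σ ≤ s ^ σ := by
    intro s t hs hst
    rw [Real.norm_eq_abs]
    exact quot_le hσ hσα hα hs hst
  refine ⟨⟨?_, ⟨0, hlim⟩, ?_, ?_⟩, hlim⟩
  · intro x hx
    exact (Real.continuousAt_rpow_const x (α - 1) (Or.inl hx.1.ne')).continuousWithinAt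
  · refine ⟨T ^ σ, ?_⟩
    rintro c ⟨s, t, hs, hst, htT, rfl⟩
    exact (hquot hs hst).trans (Real.rpow_le_rpow hs.le (hst.le.trans htT) hσ.le)
  · apply tendsto_of_tendsto_of_tendsto_of_le_of_le' tendsto_const_nhds hσ0
    · filter_upwards with t'
      exact Real.sSup_nonneg (hnn t')
    · filter_upwards [self_mem_nhdsWithin] with t' ht'
      refine Real.sSup_le ?_ (Real.rpow_nonneg (le_of_lt ht') σ)
      rintro c ⟨s, t, hs, hst, htt', rfl⟩
      exact (hquot hs hst).trans (Real.rpow_le_rpow hs.le (hst.le.trans htt') hσ.le)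
end

section
/- Let a, b, μ, ν, C, ε, T > 0 and let w : (0,T] → ℝ satisfy 0 ≤ w(t) ≤ C t^{ε-1} for all t ∈ (0,T]. If w(t) ≤ a t^{μ-1} + b ∫₀^t (t-τ)^{ν-1} w(τ) dτ for all 0 < t ≤ T, then w(t) ≤ a Γ(μ) t^{μ-1} E_{μ,ν}((b Γ(ν))^{1/ν} t) for all 0 < t ≤ T, where E_{μ,ν}(t) = Σ_{n≥0} t^{nν} / Γ(μ + nν). -/
open MeasureTheory Set Real Filter

section Auxiliary

lemma beta_integrable {p q : ℝ} (hp : 0 < p) (hq : 0 < q) {c : ℝ} (hc : 0 < c) :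
    IntervalIntegrable (fun τ => (c - τ) ^ (p - 1) * τ ^ (q - 1)) volume 0 c := by
  have h1 : IntervalIntegrable (fun τ : ℝ => (c - τ) ^ (p - 1) * τ ^ (q - 1)) volume 0 (c / 2) := by
    apply IntervalIntegrable.continuousOn_mul
      (intervalIntegral.intervalIntegrable_rpow' (by linarith))
    apply ContinuousOn.rpow_const (continuous_const.sub continuous_id).continuousOn
    intro x hx
    rw [uIcc_of_le (by linarith)] at hx
    exact Or.inl (by simp only [Pi.sub_apply, id]; nlinarith [hx.2])
  have h2 : IntervalIntegrable (fun τ : ℝ => (c - τ) ^ (p - 1) * τ ^ (q - 1)) volume (c / 2) c := by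
    apply IntervalIntegrable.mul_continuousOn
    · have h := (intervalIntegral.intervalIntegrable_rpow' (r := p - 1) (a := c / 2) (b := 0)
        (by linarith)).comp_sub_left c
      have e1 : c - c / 2 = c / 2 := by ring
      have e2 : c - 0 = c := by ring
      rwa [e1, e2] at h
    · apply ContinuousOn.rpow_const continuous_id.continuousOn
      intro x hx
      rw [uIcc_of_le (by linarith)] at hx
      exact Or.inl (by simp only [id]; nlinarith [hx.1])
  exact h1.trans h2

lemma beta_value {p q : ℝ} (hp : 0 < p) (hq : 0 < q) {c : ℝ} (hc : 0 < c) :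
    ∫ τ in (0:ℝ)..c, (c - τ) ^ (p - 1) * τ ^ (q - 1)
      = Real.Gamma p * Real.Gamma q / Real.Gamma (p + q) * c ^ (p + q - 1) := by
  have hGpq : Real.Gamma (q + p) ≠ 0 := (Real.Gamma_pos_of_pos (by linarith)).ne'
  have h1 : ((∫ τ in (0:ℝ)..c, (c - τ) ^ (p - 1) * τ ^ (q - 1) : ℝ) : ℂ)
      = ∫ τ in (0:ℝ)..c, ((τ:ℂ)) ^ ((q:ℂ) - 1) * ((c:ℂ) - τ) ^ ((p:ℂ) - 1) := by
    rw [← intervalIntegral.integral_ofReal]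
    apply intervalIntegral.integral_congr
    intro x hx
    rw [uIcc_of_le hc.le] at hx
    have hx0 : (0:ℝ) ≤ x := hx.1
    have hxc : (0:ℝ) ≤ c - x := by linarith [hx.2]
    show ((((c - x) ^ (p - 1) * x ^ (q - 1) : ℝ)) : ℂ)
        = (x:ℂ) ^ ((q:ℂ) - 1) * ((c:ℂ) - (x:ℂ)) ^ ((p:ℂ) - 1)
    rw [Complex.ofReal_mul, Complex.ofReal_cpow hxc, Complex.ofReal_cpow hx0]
    push_cast
    ring
  have h2 := Complex.betaIntegral_scaled (q:ℂ) (p:ℂ) hc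
  have h3 := Complex.Gamma_mul_Gamma_eq_betaIntegral (s := (q:ℂ)) (t := (p:ℂ))
    (by simpa using hq) (by simpa using hp)
  have h4 : Complex.betaIntegral (q:ℂ) (p:ℂ)
      = ((Real.Gamma q * Real.Gamma p / Real.Gamma (q + p) : ℝ) : ℂ) := by
    have hqp : ((q:ℂ) + (p:ℂ)) = ((q + p : ℝ) : ℂ) := by push_cast; ring
    rw [hqp, Complex.Gamma_ofReal, Complex.Gamma_ofReal, Complex.Gamma_ofReal] at h3
    have hG : ((Real.Gamma (q + p) : ℝ) : ℂ) ≠ 0 := by exact_mod_cast hGpq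
    push_cast
    field_simp
    linear_combination -h3
  have h5 : ((c:ℂ)) ^ ((q:ℂ) + (p:ℂ) - 1) = ((c ^ (q + p - 1) : ℝ) : ℂ) := by
    rw [Complex.ofReal_cpow hc.le]
    congr 1
    push_cast
    ring
  apply Complex.ofReal_injective
  rw [h1, h2, h4, h5]
  push_cast
  rw [show q + p = p + q by ring]
  ring
noncomputable def gaux (K ν c : ℝ) (n : ℕ) (t : ℝ) : ℝ :=
  Real.Gamma c / Real.Gamma (c + (n : ℝ) * ν) * K ^ n * t ^ (c + (n : ℝ) * ν - 1)

lemma gaux_nonneg {K ν c : ℝ} (hK : 0 ≤ K) (hν : 0 < ν) (hc : 0 < c) (n : ℕ) {t : ℝ}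
    (ht : 0 ≤ t) : 0 ≤ gaux K ν c n t := by
  unfold gaux
  have h1 := Real.Gamma_pos_of_pos hc
  have h2 := Real.Gamma_pos_of_pos (show 0 < c + (n : ℝ) * ν by positivity)
  positivity

lemma gaux_zero {K ν c : ℝ} (hc : 0 < c) (t : ℝ) : gaux K ν c 0 t = t ^ (c - 1) := by
  unfold gaux
  simp [div_self (Real.Gamma_pos_of_pos hc).ne']

lemma gaux_integrable {K ν c : ℝ} (hν : 0 < ν) (hc : 0 < c) {t : ℝ} (ht : 0 < t) (k : ℕ) :
    IntervalIntegrable (fun τ => (t - τ) ^ (ν - 1) * gaux K ν c k τ) volume 0 t := by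
  have h := (beta_integrable hν (show 0 < c + (k : ℝ) * ν by positivity) ht).const_mul
    (Real.Gamma c / Real.Gamma (c + (k : ℝ) * ν) * K ^ k)
  convert h using 1
  funext τ
  unfold gaux
  ring

lemma gaux_step {b ν c : ℝ} (hb : 0 < b) (hν : 0 < ν) (hc : 0 < c) {t : ℝ} (ht : 0 < t) (k : ℕ) :
    b * ∫ τ in (0:ℝ)..t, (t - τ) ^ (ν - 1) * gaux (b * Real.Gamma ν) ν c k τ
      = gaux (b * Real.Gamma ν) ν c (k + 1) t := by
  have he : 0 < c + (k : ℝ) * ν := by positivity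
  have h1 : (fun τ => (t - τ) ^ (ν - 1) * gaux (b * Real.Gamma ν) ν c k τ)
      = fun τ => (Real.Gamma c / Real.Gamma (c + (k : ℝ) * ν) * (b * Real.Gamma ν) ^ k)
          * ((t - τ) ^ (ν - 1) * τ ^ ((c + (k : ℝ) * ν) - 1)) := by
    funext τ
    unfold gaux
    ring
  rw [h1, intervalIntegral.integral_const_mul, beta_value hν he ht]
  unfold gaux
  have hGe := (Real.Gamma_pos_of_pos he).ne'
  have hc1 : ((k + 1 : ℕ) : ℝ) = (k : ℝ) + 1 := by push_cast; ring
  rw [hc1, show ν + (c + (k : ℝ) * ν) = c + ((k : ℝ) + 1) * ν from by ring]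
  rw [pow_succ]
  field_simp

lemma ml_summable {c ν : ℝ} (hc : 0 < c) (hν : 0 < ν) {x : ℝ} (hx : 0 ≤ x) :
    Summable (fun n : ℕ => x ^ ((n : ℝ) * ν) / Real.Gamma (c + (n : ℝ) * ν)) := by
  rcases eq_or_lt_of_le hx with h0 | hxpos
  · apply summable_of_ne_finset_zero (s := ({0} : Finset ℕ))
    intro n hn
    have hn0 : n ≠ 0 := by simpa using hn
    have hne : ((n : ℝ) * ν) ≠ 0 := by
      have : (0:ℝ) < (n : ℝ) := by exact_mod_cast Nat.pos_of_ne_zero hn0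
      positivity
    rw [← h0, Real.zero_rpow hne, zero_div]
  · set f := fun n : ℕ => x ^ ((n : ℝ) * ν) / Real.Gamma (c + (n : ℝ) * ν) with hf
    have hfpos : ∀ n, 0 < f n := fun n =>
      div_pos (Real.rpow_pos_of_pos hxpos _)
        (Real.Gamma_pos_of_pos (by positivity))
    set k := max 1 ⌈1 / ν⌉₊ with hk
    have hk1 : 1 ≤ k := le_max_left _ _
    have hk0 : 0 < k := hk1
    have hkν : 1 ≤ (k : ℝ) * ν := by
      have h1 : (1:ℝ) / ν ≤ (⌈1 / ν⌉₊ : ℝ) := Nat.le_ceil _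
      have h2 : ((⌈1 / ν⌉₊ : ℕ) : ℝ) ≤ (k : ℝ) := by exact_mod_cast le_max_right 1 ⌈1 / ν⌉₊
      have h3 : (1:ℝ) / ν ≤ (k : ℝ) := le_trans h1 h2
      calc (1:ℝ) = (1 / ν) * ν := by field_simp
        _ ≤ (k : ℝ) * ν := by nlinarith
    obtain ⟨N, hN⟩ := exists_nat_ge ((2 + 2 * x ^ ((k : ℝ) * ν)) / ν)
    have hNs : ∀ n : ℕ, N ≤ n → 2 + 2 * x ^ ((k : ℝ) * ν) ≤ c + (n : ℝ) * ν := by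
      intro n hn
      have h1 : ((N : ℝ)) ≤ (n : ℝ) := by exact_mod_cast hn
      have h2 : (2 + 2 * x ^ ((k : ℝ) * ν)) ≤ (N : ℝ) * ν := by
        rw [div_le_iff₀ hν] at hN
        nlinarith
      nlinarith
    have hratio : ∀ n : ℕ, N ≤ n → f (n + k) ≤ f n / 2 := by
      intro n hn
      have hxk : 0 < x ^ ((k : ℝ) * ν) := Real.rpow_pos_of_pos hxpos _
      have hxn : 0 < x ^ ((n : ℝ) * ν) := Real.rpow_pos_of_pos hxpos _
      have hsn := hNs n hn
      have hsn2 : 2 ≤ c + (n : ℝ) * ν := by nlinarith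
      have hGn := Real.Gamma_pos_of_pos (show 0 < c + (n : ℝ) * ν by positivity)
      have hGnk := Real.Gamma_pos_of_pos
        (show 0 < c + ((n + k : ℕ) : ℝ) * ν by positivity)
      have hd : (c + (n : ℝ) * ν) * Real.Gamma (c + (n : ℝ) * ν)
          ≤ Real.Gamma (c + ((n + k : ℕ) : ℝ) * ν) := by
        rw [← Real.Gamma_add_one (show c + (n : ℝ) * ν ≠ 0 by positivity)]
        apply Real.Gamma_strictMonoOn_Ici.monotoneOn
        · simp only [mem_Ici]; linarith
        · simp only [mem_Ici]
          push_cast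
          nlinarith
        · push_cast
          nlinarith
      have he : x ^ (((n + k : ℕ) : ℝ) * ν) = x ^ ((n : ℝ) * ν) * x ^ ((k : ℝ) * ν) := by
        rw [← Real.rpow_add hxpos]
        congr 1
        push_cast
        ring
      show x ^ (((n + k : ℕ) : ℝ) * ν) / Real.Gamma (c + ((n + k : ℕ) : ℝ) * ν)
          ≤ (x ^ ((n : ℝ) * ν) / Real.Gamma (c + (n : ℝ) * ν)) / 2
      rw [div_div, div_le_div_iff₀ hGnk (by positivity)]
      calc x ^ (((n + k : ℕ) : ℝ) * ν) * (Real.Gamma (c + (n : ℝ) * ν) * 2)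
          = (x ^ ((n : ℝ) * ν) * (x ^ ((k : ℝ) * ν) * 2)) * Real.Gamma (c + (n : ℝ) * ν) := by
            rw [he]; ring
        _ ≤ (x ^ ((n : ℝ) * ν) * (c + (n : ℝ) * ν)) * Real.Gamma (c + (n : ℝ) * ν) := by
            apply mul_le_mul_of_nonneg_right _ hGn.le
            apply mul_le_mul_of_nonneg_left _ hxn.le
            linarith
        _ = x ^ ((n : ℝ) * ν) * ((c + (n : ℝ) * ν) * Real.Gamma (c + (n : ℝ) * ν)) := by ring
        _ ≤ x ^ ((n : ℝ) * ν) * Real.Gamma (c + ((n + k : ℕ) : ℝ) * ν) :=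
            mul_le_mul_of_nonneg_left hd hxn.le
    set B := ∑ j ∈ Finset.range k, f (N + j) with hB
    have hBj : ∀ j, j < k → f (N + j) ≤ B :=
      fun j hj => Finset.single_le_sum (f := fun j => f (N + j))
        (fun i _ => (hfpos _).le) (Finset.mem_range.mpr hj)
    have hB0 : 0 ≤ B := Finset.sum_nonneg fun i _ => (hfpos _).le
    have hdecay : ∀ i : ℕ, f (N + i) ≤ B * (1 / 2 : ℝ) ^ (i / k) := by
      intro i
      induction i using Nat.strong_induction_on with
      | _ i ih =>
        by_cases hik : i < k
        · rw [Nat.div_eq_of_lt hik, pow_zero, mul_one]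
          exact hBj i hik
        · push_neg at hik
          have h1 : N + i = (N + (i - k)) + k := by omega
          have h2 := hratio (N + (i - k)) (Nat.le_add_right _ _)
          have h3 := ih (i - k) (by omega)
          have h4 : i / k = (i - k) / k + 1 := by
            rw [Nat.div_eq_sub_div hk0 hik]
          rw [h1]
          calc f ((N + (i - k)) + k) ≤ f (N + (i - k)) / 2 := h2
            _ ≤ B * (1 / 2 : ℝ) ^ ((i - k) / k) / 2 := by linarith
            _ = B * (1 / 2 : ℝ) ^ ((i - k) / k + 1) := by rw [pow_succ]; ring
            _ = B * (1 / 2 : ℝ) ^ (i / k) := by rw [h4]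
    set r := ((1 / 2 : ℝ)) ^ ((1 : ℝ) / (k : ℝ)) with hr
    have hr0 : 0 ≤ r := Real.rpow_nonneg (by norm_num) _
    have hr1 : r < 1 := Real.rpow_lt_one (by norm_num) (by norm_num) (by positivity)
    have hkey : ∀ i : ℕ, ((1 / 2 : ℝ)) ^ (i / k) ≤ 2 * r ^ i := by
      intro i
      have hle : (i : ℝ) / (k : ℝ) - 1 ≤ ((i / k : ℕ) : ℝ) := by
        have h1 : i < k * (i / k) + k := by
          have := Nat.div_add_mod i k
          have := Nat.mod_lt i hk0
          omega
        have h2 : (i : ℝ) < (k : ℝ) * ((i / k : ℕ) : ℝ) + (k : ℝ) := by exact_mod_cast h1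
        have hkR : (0:ℝ) < (k : ℝ) := by exact_mod_cast hk0
        rw [div_sub_one hkR.ne', div_le_iff₀ hkR]
        nlinarith
      have e1 : ((1 / 2 : ℝ)) ^ (i / k) = ((1 / 2 : ℝ)) ^ (((i / k : ℕ) : ℝ)) := by
        rw [Real.rpow_natCast]
      have e2 : (2:ℝ) * r ^ i = ((1 / 2 : ℝ)) ^ ((i : ℝ) / (k : ℝ) - 1) := by
        rw [Real.rpow_sub (by norm_num), Real.rpow_one]
        have : ((1 / 2 : ℝ)) ^ ((i : ℝ) / (k : ℝ))
            = (((1 / 2 : ℝ)) ^ ((1:ℝ) / (k : ℝ))) ^ (i : ℕ) := by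
          rw [← Real.rpow_natCast (((1 / 2 : ℝ)) ^ ((1:ℝ) / (k : ℝ))) i,
            ← Real.rpow_mul (by norm_num)]
          congr 1
          field_simp
        rw [this, ← hr]
        ring
      rw [e1, e2]
      exact Real.rpow_le_rpow_of_exponent_ge (by norm_num) (by norm_num) hle
    have hgeo : Summable (fun i : ℕ => B * (2 * r ^ i)) :=
      ((summable_geometric_of_lt_one hr0 hr1).mul_left 2).mul_left B
    have hsum : Summable (fun i : ℕ => f (i + N)) := by
      apply Summable.of_nonneg_of_le (fun i => (hfpos _).le) _ hgeo
      intro i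
      calc f (i + N) = f (N + i) := by rw [Nat.add_comm]
        _ ≤ B * (1 / 2 : ℝ) ^ (i / k) := hdecay i
        _ ≤ B * (2 * r ^ i) := mul_le_mul_of_nonneg_left (hkey i) hB0
    exact (summable_nat_add_iff N).mp hsum
lemma gaux_eq {K ν c : ℝ} (hK : 0 < K) (hν : 0 < ν) (hc : 0 < c) {t : ℝ} (ht : 0 < t) (n : ℕ) :
    gaux K ν c n t = Real.Gamma c * t ^ (c - 1) *
      ((K ^ ((1:ℝ) / ν) * t) ^ ((n : ℝ) * ν) / Real.Gamma (c + (n : ℝ) * ν)) := by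
  unfold gaux
  have h1 : (K ^ ((1:ℝ)/ν) * t) ^ ((n : ℝ) * ν) = K ^ n * t ^ ((n : ℝ) * ν) := by
    rw [Real.mul_rpow (Real.rpow_nonneg hK.le _) ht.le, ← Real.rpow_natCast K n,
      ← Real.rpow_mul hK.le, show (1/ν) * ((n:ℝ) * ν) = (n:ℝ) from by field_simp]
  have h2 : t ^ (c + (n : ℝ) * ν - 1) = t ^ (c - 1) * t ^ ((n : ℝ) * ν) := by
    rw [← Real.rpow_add ht]; congr 1; ring
  rw [h1, h2]
  ring


end Auxiliary

/-- The two-parameter Mittag-Leffler-type function `E_{μ,ν}(t) = Σ_{n≥0} t^{nν}/Γ(μ+nν)`. -/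
noncomputable def mittagLeffler (μ ν t : ℝ) : ℝ :=
  ∑' n : ℕ, t ^ ((n : ℝ) * ν) / Real.Gamma (μ + (n : ℝ) * ν)

/-- Singular-kernel Gronwall (Henry) inequality: if `0 ≤ w(t) ≤ C t^{ε-1}` and
`w(t) ≤ a t^{μ-1} + b ∫₀ᵗ (t-τ)^{ν-1} w(τ) dτ` on `(0,T]`, then
`w(t) ≤ a Γ(μ) t^{μ-1} E_{μ,ν}((bΓ(ν))^{1/ν} t)` on `(0,T]`. -/
theorem gronwall_henry (a b μ ν C ε T : ℝ)
    (ha : 0 < a) (hb : 0 < b) (hμ : 0 < μ) (hν : 0 < ν) (hC : 0 < C) (hε : 0 < ε)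
    (hT : 0 < T) (w : ℝ → ℝ)
    (hw0 : ∀ t ∈ Set.Ioc (0:ℝ) T, 0 ≤ w t)
    (hwC : ∀ t ∈ Set.Ioc (0:ℝ) T, w t ≤ C * t ^ (ε - 1))
    (hineq : ∀ t ∈ Set.Ioc (0:ℝ) T,
      w t ≤ a * t ^ (μ - 1) + b * ∫ τ in (0:ℝ)..t, (t - τ) ^ (ν - 1) * w τ) :
    ∀ t ∈ Set.Ioc (0:ℝ) T,
      w t ≤ a * Real.Gamma μ * t ^ (μ - 1) *
        mittagLeffler μ ν ((b * Real.Gamma ν) ^ (1 / ν) * t) := by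
  set K := b * Real.Gamma ν with hK
  have hKpos : 0 < K := mul_pos hb (Real.Gamma_pos_of_pos hν)
  have main : ∀ n : ℕ, ∀ t ∈ Set.Ioc (0:ℝ) T,
      w t ≤ a * (∑ j ∈ Finset.range n, gaux K ν μ j t) + C * gaux K ν ε n t := by
    intro n
    induction n with
    | zero =>
      intro t htm
      rw [gaux_zero hε]
      simpa using hwC t htm
    | succ n ih =>
      intro t htm
      obtain ⟨ht0, htT⟩ := htm
      have h1 := hineq t ⟨ht0, htT⟩
      have hsucc : ∑ j ∈ Finset.range (n+1), gaux K ν μ j t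
          = (∑ j ∈ Finset.range n, gaux K ν μ (j+1) t) + t ^ (μ - 1) := by
        rw [Finset.sum_range_succ', gaux_zero hμ]
      have hgε1 : 0 ≤ gaux K ν ε (n+1) t := gaux_nonneg hKpos.le hν hε _ ht0.le
      have hgμ : ∀ j : ℕ, 0 ≤ gaux K ν μ j t := fun j => gaux_nonneg hKpos.le hν hμ j ht0.le
      by_cases hint : IntervalIntegrable (fun τ => (t - τ) ^ (ν - 1) * w τ) volume 0 t
      · -- integrable case
        have hwF : ∀ τ ∈ Set.Ioc (0:ℝ) t,
            w τ ≤ a * (∑ j ∈ Finset.range n, gaux K ν μ j τ) + C * gaux K ν ε n τ :=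
          fun τ hτ => ih τ ⟨hτ.1, hτ.2.trans htT⟩
        have expand : ∀ τ : ℝ, (t - τ) ^ (ν - 1) *
            (a * (∑ j ∈ Finset.range n, gaux K ν μ j τ) + C * gaux K ν ε n τ)
            = (∑ j ∈ Finset.range n, a * ((t - τ) ^ (ν - 1) * gaux K ν μ j τ))
              + C * ((t - τ) ^ (ν - 1) * gaux K ν ε n τ) := by
          intro τ
          rw [mul_add]
          congr 1
          · rw [Finset.mul_sum, Finset.mul_sum]
            exact Finset.sum_congr rfl fun j _ => by ring
          · ring
        have hsum_int : IntervalIntegrable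
            (fun τ => ∑ j ∈ Finset.range n, a * ((t - τ) ^ (ν - 1) * gaux K ν μ j τ))
            volume 0 t := by
          have h := IntervalIntegrable.sum (μ := volume) (a := 0) (b := t) (Finset.range n)
            (f := fun j => fun τ => a * ((t - τ) ^ (ν - 1) * gaux K ν μ j τ))
            (fun j _ => (gaux_integrable hν hμ ht0 j).const_mul a)
          rw [Finset.sum_fn] at h
          exact h
        have hlast_int : IntervalIntegrable
            (fun τ => C * ((t - τ) ^ (ν - 1) * gaux K ν ε n τ)) volume 0 t :=
          (gaux_integrable hν hε ht0 n).const_mul C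
        have hFint : IntervalIntegrable (fun τ => (t - τ) ^ (ν - 1) *
            (a * (∑ j ∈ Finset.range n, gaux K ν μ j τ) + C * gaux K ν ε n τ)) volume 0 t := by
          have h1' : (fun τ => (t - τ) ^ (ν - 1) *
              (a * (∑ j ∈ Finset.range n, gaux K ν μ j τ) + C * gaux K ν ε n τ))
              = fun τ => (∑ j ∈ Finset.range n, a * ((t - τ) ^ (ν - 1) * gaux K ν μ j τ))
                + C * ((t - τ) ^ (ν - 1) * gaux K ν ε n τ) := funext expand
          rw [h1']
          exact hsum_int.add hlast_int
        have hmono : (∫ τ in (0:ℝ)..t, (t - τ) ^ (ν - 1) * w τ)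
            ≤ ∫ τ in (0:ℝ)..t, (t - τ) ^ (ν - 1) *
              (a * (∑ j ∈ Finset.range n, gaux K ν μ j τ) + C * gaux K ν ε n τ) := by
          apply intervalIntegral.integral_mono_ae_restrict ht0.le hint hFint
          rw [← Measure.restrict_congr_set Ioc_ae_eq_Icc, Filter.EventuallyLE,
            ae_restrict_iff' measurableSet_Ioc]
          filter_upwards with τ hτ
          have h2 : (0:ℝ) ≤ (t - τ) ^ (ν - 1) := Real.rpow_nonneg (by linarith [hτ.2]) _
          exact mul_le_mul_of_nonneg_left (hwF τ hτ) h2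
        have hlin : (∫ τ in (0:ℝ)..t, (t - τ) ^ (ν - 1) *
            (a * (∑ j ∈ Finset.range n, gaux K ν μ j τ) + C * gaux K ν ε n τ))
            = (∑ j ∈ Finset.range n, a * ∫ τ in (0:ℝ)..t, (t - τ) ^ (ν - 1) * gaux K ν μ j τ)
              + C * ∫ τ in (0:ℝ)..t, (t - τ) ^ (ν - 1) * gaux K ν ε n τ := by
          rw [intervalIntegral.integral_congr (g := fun τ =>
            (∑ j ∈ Finset.range n, a * ((t - τ) ^ (ν - 1) * gaux K ν μ j τ))
              + C * ((t - τ) ^ (ν - 1) * gaux K ν ε n τ)) (fun τ _ => expand τ)]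
          rw [intervalIntegral.integral_add hsum_int hlast_int,
            intervalIntegral.integral_finset_sum
              (fun j (_ : j ∈ Finset.range n) => (gaux_integrable hν hμ ht0 j).const_mul a),
            intervalIntegral.integral_const_mul]
          congr 1
          exact Finset.sum_congr rfl fun j _ => by rw [intervalIntegral.integral_const_mul]
        have hbF : b * (∫ τ in (0:ℝ)..t, (t - τ) ^ (ν - 1) *
            (a * (∑ j ∈ Finset.range n, gaux K ν μ j τ) + C * gaux K ν ε n τ))
            = a * (∑ j ∈ Finset.range n, gaux K ν μ (j+1) t) + C * gaux K ν ε (n+1) t := by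
          rw [hlin, mul_add, Finset.mul_sum, Finset.mul_sum]
          congr 1
          · exact Finset.sum_congr rfl fun j _ => by
              rw [← gaux_step hb hν hμ ht0 j]; ring
          · rw [← gaux_step hb hν hε ht0 n]; ring
        have hchain : w t ≤ a * t ^ (μ - 1) +
            (a * (∑ j ∈ Finset.range n, gaux K ν μ (j+1) t) + C * gaux K ν ε (n+1) t) := by
          calc w t ≤ a * t ^ (μ - 1) + b * ∫ τ in (0:ℝ)..t, (t - τ) ^ (ν - 1) * w τ := h1
            _ ≤ a * t ^ (μ - 1) + b * ∫ τ in (0:ℝ)..t, (t - τ) ^ (ν - 1) *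
                (a * (∑ j ∈ Finset.range n, gaux K ν μ j τ) + C * gaux K ν ε n τ) := by
                have := mul_le_mul_of_nonneg_left hmono hb.le
                linarith
            _ = _ := by rw [hbF]
        have hsum' : a * (∑ j ∈ Finset.range (n+1), gaux K ν μ j t)
            = a * (∑ j ∈ Finset.range n, gaux K ν μ (j+1) t) + a * t ^ (μ - 1) := by
          rw [hsucc]; ring
        linarith
      · -- non-integrable case: the integral is zero
        rw [intervalIntegral.integral_undef hint] at h1
        have h0 : t ^ (μ - 1) ≤ ∑ j ∈ Finset.range (n+1), gaux K ν μ j t := by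
          rw [← gaux_zero (K := K) (ν := ν) hμ t]
          exact Finset.single_le_sum (f := fun j => gaux K ν μ j t)
            (fun j _ => hgμ j) (Finset.mem_range.mpr (Nat.succ_pos n))
        have h2 : a * t ^ (μ - 1) ≤ a * ∑ j ∈ Finset.range (n+1), gaux K ν μ j t :=
          mul_le_mul_of_nonneg_left h0 ha.le
        nlinarith [mul_nonneg hC.le hgε1]
  -- final limit argument
  intro t htm
  obtain ⟨ht0, htT⟩ := htm
  set x := K ^ ((1:ℝ)/ν) * t with hx
  have hxnn : 0 ≤ x := mul_nonneg (Real.rpow_nonneg hKpos.le _) ht0.le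
  have hsμ := ml_summable hμ hν hxnn
  have hsε := ml_summable hε hν hxnn
  have hMLnn : 0 ≤ Real.Gamma μ * t ^ (μ - 1) :=
    mul_nonneg (Real.Gamma_pos_of_pos hμ).le (Real.rpow_nonneg ht0.le _)
  have hpartial : ∀ n : ℕ, ∑ j ∈ Finset.range n, gaux K ν μ j t
      ≤ Real.Gamma μ * t ^ (μ - 1) * mittagLeffler μ ν x := by
    intro n
    have e : ∑ j ∈ Finset.range n, gaux K ν μ j t
        = Real.Gamma μ * t ^ (μ - 1) *
          ∑ j ∈ Finset.range n, x ^ ((j : ℝ) * ν) / Real.Gamma (μ + (j : ℝ) * ν) := by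
      rw [Finset.mul_sum]
      exact Finset.sum_congr rfl fun j _ => gaux_eq hKpos hν hμ ht0 j
    rw [e]
    unfold mittagLeffler
    apply mul_le_mul_of_nonneg_left _ hMLnn
    apply Summable.sum_le_tsum _ _ hsμ
    intro j _
    exact div_nonneg (Real.rpow_nonneg hxnn _) (Real.Gamma_pos_of_pos (by positivity)).le
  have htail : Tendsto (fun n : ℕ => C * gaux K ν ε n t) atTop (nhds 0) := by
    have h0 := hsε.tendsto_atTop_zero
    have e : (fun n : ℕ => C * gaux K ν ε n t)
        = fun n : ℕ => (C * (Real.Gamma ε * t ^ (ε - 1))) *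
            (x ^ ((n : ℝ) * ν) / Real.Gamma (ε + (n : ℝ) * ν)) := by
      funext n
      rw [gaux_eq hKpos hν hε ht0 n]
      ring
    rw [e]
    have := h0.const_mul (C * (Real.Gamma ε * t ^ (ε - 1)))
    simpa using this
  have hub : ∀ n : ℕ, w t ≤ a * Real.Gamma μ * t ^ (μ - 1) * mittagLeffler μ ν x
      + C * gaux K ν ε n t := by
    intro n
    have h := main n t ⟨ht0, htT⟩
    have h2 := mul_le_mul_of_nonneg_left (hpartial n) ha.le
    have e : a * (Real.Gamma μ * t ^ (μ - 1) * mittagLeffler μ ν x)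
        = a * Real.Gamma μ * t ^ (μ - 1) * mittagLeffler μ ν x := by ring
    linarith [e ▸ h2]
  have hlim : Tendsto (fun n : ℕ => a * Real.Gamma μ * t ^ (μ - 1) * mittagLeffler μ ν x
      + C * gaux K ν ε n t) atTop
      (nhds (a * Real.Gamma μ * t ^ (μ - 1) * mittagLeffler μ ν x + 0)) :=
    tendsto_const_nhds.add htail
  have hfin := ge_of_tendsto' hlim hub
  rw [add_zero] at hfin
  exact hfin
end

section
/- Let a, b, μ, ν, C, ε, T > 0 and φ : {(t,s) : 0 ≤ s < t ≤ T} → ℝ satisfy 0 ≤ φ(t,s) ≤ C (t-s)^{ε-1}. If φ(t,s) ≤ a (t-s)^{μ-1} + b ∫_s^t (t-τ)^{ν-1} φ(τ,s) dτ for all 0 ≤ s < t ≤ T, then φ(t,s) ≤ a Γ(μ) (t-s)^{μ-1} E_{μ,ν}((b Γ(ν))^{1/ν} (t-s)) for all 0 ≤ s < t ≤ T. -/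
open MeasureTheory Set Real
open Filter

lemma myBeta01 {p q : ℝ} (hp : 0 < p) (hq : 0 < q) :
    IntervalIntegrable (fun x : ℝ => x ^ (p - 1) * (1 - x) ^ (q - 1)) volume 0 1 ∧
    ∫ x in (0:ℝ)..1, x ^ (p - 1) * (1 - x) ^ (q - 1)
      = Real.Gamma p * Real.Gamma q / Real.Gamma (p + q) := by
  have hp' : 0 < (p : ℂ).re := by simpa using hp
  have hq' : 0 < (q : ℂ).re := by simpa using hq
  have hconv := Complex.betaIntegral_convergent hp' hq'
  have heq : ∀ x ∈ Icc (0:ℝ) 1,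
      (x : ℂ) ^ ((p:ℂ) - 1) * ((1:ℂ) - (x:ℂ)) ^ ((q:ℂ) - 1)
        = ((x ^ (p - 1) * (1 - x) ^ (q - 1) : ℝ) : ℂ) := by
    intro x hx
    rw [Complex.ofReal_mul, Complex.ofReal_cpow hx.1 (p-1),
      Complex.ofReal_cpow (by linarith [hx.2] : (0:ℝ) ≤ 1 - x) (q-1)]
    push_cast
    ring
  have h2 : IntervalIntegrable (fun x : ℝ => ((x ^ (p-1) * (1-x)^(q-1) : ℝ) : ℂ)) volume 0 1 := by
    rw [intervalIntegrable_iff] at hconv ⊢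
    exact hconv.congr_fun (fun x hx => heq x (Ioc_subset_Icc_self (by simpa [uIoc_of_le] using hx)))
      measurableSet_uIoc
  have hint : IntervalIntegrable (fun x : ℝ => x ^ (p - 1) * (1 - x) ^ (q - 1)) volume 0 1 := by
    rw [intervalIntegrable_iff] at h2 ⊢
    have h3 := h2.re
    simp at h3
    rw [uIoc_of_le zero_le_one]
    exact h3
  refine ⟨hint, ?_⟩
  have h4 : ((∫ x in (0:ℝ)..1, x ^ (p-1) * (1-x)^(q-1) : ℝ) : ℂ) = Complex.betaIntegral p q := by
    rw [← intervalIntegral.integral_ofReal]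
    exact (intervalIntegral.integral_congr (fun x hx =>
      (heq x (by simpa [uIcc_of_le] using hx)))).symm
  have h5 := Complex.Gamma_mul_Gamma_eq_betaIntegral hp' hq'
  rw [← h4, ← Complex.ofReal_add, Complex.Gamma_ofReal, Complex.Gamma_ofReal,
    Complex.Gamma_ofReal] at h5
  have hne : Real.Gamma (p + q) ≠ 0 := (Real.Gamma_pos_of_pos (by linarith)).ne'
  have h6 : Real.Gamma p * Real.Gamma q
      = Real.Gamma (p+q) * ∫ x in (0:ℝ)..1, x ^ (p-1) * (1-x)^(q-1) := by
    exact_mod_cast h5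
  field_simp
  linarith [h6]


lemma myBetaGen {p q s t : ℝ} (hp : 0 < p) (hq : 0 < q) (hst : s < t) :
    IntervalIntegrable (fun τ => (t - τ) ^ (p - 1) * (τ - s) ^ (q - 1)) volume s t ∧
    ∫ τ in s..t, (t - τ) ^ (p - 1) * (τ - s) ^ (q - 1)
      = Real.Gamma p * Real.Gamma q / Real.Gamma (p + q) * (t - s) ^ (p + q - 1) := by
  obtain ⟨Ig, Vg⟩ := myBeta01 hq hp
  set c := t - s with hcdef
  have hc0 : 0 < c := sub_pos.2 hst
  set g : ℝ → ℝ := fun x => x ^ (q-1) * (1-x) ^ (p-1) with hg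
  have key : ∀ x ∈ Icc (0:ℝ) 1,
      (t - (c * x + s)) ^ (p-1) * ((c * x + s) - s) ^ (q-1) = c ^ (p + q - 2) * g x := by
    intro x hx
    have h1 : t - (c * x + s) = c * (1 - x) := by rw [hcdef]; ring
    have h2 : (c * x + s) - s = c * x := by ring
    rw [h1, h2, Real.mul_rpow hc0.le (by linarith [hx.2]), Real.mul_rpow hc0.le hx.1,
      show (p + q - 2 : ℝ) = (p-1) + (q-1) by ring, Real.rpow_add hc0, hg]
    ring
  constructor
  · have h1 := Ig.comp_mul_left (c := c⁻¹)
    have h1' : IntervalIntegrable (fun x => g (c⁻¹ * x)) volume 0 c := by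
      simpa [hc0.ne'] using h1
    have h2 := h1'.comp_sub_right s
    have h2' : IntervalIntegrable (fun τ => g (c⁻¹ * (τ - s))) volume s t := by
      have : c + s = t := by rw [hcdef]; ring
      simpa [this] using h2
    have h3 := h2'.const_mul (c ^ (p + q - 2))
    rw [intervalIntegrable_iff_integrableOn_Ioc_of_le hst.le] at h3 ⊢
    refine h3.congr_fun (fun τ hτ => ?_) measurableSet_Ioc
    have hx : c⁻¹ * (τ - s) ∈ Icc (0:ℝ) 1 := by
      constructor
      · exact mul_nonneg (inv_nonneg.2 hc0.le) (by linarith [hτ.1])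
      · rw [inv_mul_le_iff₀ hc0]
        simpa [hcdef] using hτ.2
    have := key _ hx
    have harg : c * (c⁻¹ * (τ - s)) + s = τ := by field_simp; ring
    rw [harg] at this
    exact this.symm
  · have hsub := intervalIntegral.integral_comp_mul_add (a := (0:ℝ)) (b := (1:ℝ))
      (fun τ => (t - τ) ^ (p-1) * (τ - s) ^ (q-1)) (ne_of_gt hc0) s
    have hend : c * 0 + s = s := by ring
    have hend2 : c * 1 + s = t := by rw [hcdef]; ring
    rw [hend, hend2] at hsub
    have hleft : ∫ x in (0:ℝ)..1, (t - (c*x+s)) ^ (p-1) * ((c*x+s) - s) ^ (q-1)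
        = c ^ (p+q-2) * (Real.Gamma q * Real.Gamma p / Real.Gamma (q + p)) := by
      rw [intervalIntegral.integral_congr (g := fun x => c ^ (p+q-2) * g x)
        (fun x hx => key x (by simpa [uIcc_of_le] using hx)),
        intervalIntegral.integral_const_mul, Vg]
    rw [hleft] at hsub
    have hI : (∫ τ in s..t, (t - τ) ^ (p-1) * (τ - s) ^ (q-1))
        = c * (c ^ (p+q-2) * (Real.Gamma q * Real.Gamma p / Real.Gamma (q + p))) := by
      rw [hsub, smul_eq_mul]
      field_simp
    have hcc : c * c ^ (p+q-2) = c ^ (p+q-1) := by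
      have h := (Real.rpow_add hc0 1 (p+q-2)).symm
      rw [Real.rpow_one] at h
      rw [h]
      congr 1
      ring
    rw [hI, ← mul_assoc, hcc, add_comm q p]
    ring


lemma mySummable {α ν x : ℝ} (hα : 0 < α) (hν : 0 < ν) (hx : 0 < x) :
    Summable (fun n : ℕ => x ^ ((n:ℝ) * ν) / Real.Gamma (α + (n:ℝ) * ν)) := by
  set u : ℕ → ℝ := fun n => x ^ ((n:ℝ) * ν) / Real.Gamma (α + (n:ℝ) * ν) with hu
  have hpos : ∀ n : ℕ, 0 < α + (n:ℝ) * ν := fun n => by positivity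
  have hupos : ∀ n : ℕ, 0 ≤ u n := fun n =>
    div_nonneg (Real.rpow_nonneg hx.le _) (Real.Gamma_pos_of_pos (hpos n)).le
  obtain ⟨N, hN⟩ : ∃ N : ℕ, 1 ≤ (N:ℝ) * ν ∧ 0 < N := by
    obtain ⟨N, hN⟩ := exists_nat_ge (1/ν)
    refine ⟨N + 1, ?_, Nat.succ_pos N⟩
    have : 1/ν ≤ ((N:ℝ)+1) := by push_cast; linarith
    rw [div_le_iff₀ hν] at this
    push_cast
    linarith [this]
  obtain ⟨K, hK⟩ : ∃ K : ℕ, 2 ≤ α + (K:ℝ)*ν ∧ 2 * x ^ ((N:ℝ)*ν) ≤ α + (K:ℝ)*ν := by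
    obtain ⟨K, hK⟩ := exists_nat_ge ((2 + 2 * x ^ ((N:ℝ)*ν))/ν)
    refine ⟨K, ?_, ?_⟩ <;>
    · rw [div_le_iff₀ hν] at hK
      have h0 : 0 ≤ x ^ ((N:ℝ)*ν) := Real.rpow_nonneg hx.le _
      nlinarith [hK, hα]
  -- key step inequality
  have step : ∀ k : ℕ, K ≤ k → u (k + N) ≤ (1/2) * u k := by
    intro k hk
    set y := α + (k:ℝ)*ν with hy
    have hy2 : 2 ≤ y := by
      have : (K:ℝ)*ν ≤ (k:ℝ)*ν :=
        mul_le_mul_of_nonneg_right (by exact_mod_cast hk) hν.le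
      rw [hy]; linarith [hK.1]
    have hyx : 2 * x ^ ((N:ℝ)*ν) ≤ y := by
      have : (K:ℝ)*ν ≤ (k:ℝ)*ν :=
        mul_le_mul_of_nonneg_right (by exact_mod_cast hk) hν.le
      rw [hy]; linarith [hK.2]
    have hy0 : 0 < y := by linarith
    have hmono : Real.Gamma (y + 1) ≤ Real.Gamma (α + ((k + N : ℕ):ℝ)*ν) := by
      apply Real.Gamma_strictMonoOn_Ici.monotoneOn
      · exact mem_Ici.2 (by linarith)
      · refine mem_Ici.2 ?_
        push_cast
        nlinarith [hN, hν.le]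
      · push_cast
        have := hN
        nlinarith
    rw [Real.Gamma_add_one hy0.ne'] at hmono
    have hnum : x ^ (((k + N : ℕ):ℝ) * ν) = x ^ ((k:ℝ)*ν) * x ^ ((N:ℝ)*ν) := by
      rw [← Real.rpow_add hx]
      congr 1
      push_cast
      ring
    have hG1 : 0 < Real.Gamma y := Real.Gamma_pos_of_pos hy0
    have hG2 : 0 < Real.Gamma (α + ((k + N : ℕ):ℝ)*ν) := Real.Gamma_pos_of_pos (hpos _)
    rw [hu]
    simp only
    rw [hnum, div_le_iff₀ hG2]
    have h1 : x ^ ((k:ℝ)*ν) * x ^ ((N:ℝ)*ν) ≤ x ^ ((k:ℝ)*ν) * (y/2) := by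
      apply mul_le_mul_of_nonneg_left _ (Real.rpow_nonneg hx.le _)
      linarith
    calc x ^ ((k:ℝ)*ν) * x ^ ((N:ℝ)*ν) ≤ x ^ ((k:ℝ)*ν) * (y/2) := h1
      _ = (1/2) * (x ^ ((k:ℝ)*ν) / Real.Gamma y) * (y * Real.Gamma y) := by
          field_simp
      _ ≤ (1/2) * (x ^ ((k:ℝ)*ν) / Real.Gamma y) * Real.Gamma (α + ((k + N : ℕ):ℝ)*ν) := by
          apply mul_le_mul_of_nonneg_left hmono
          have : 0 ≤ x ^ ((k:ℝ)*ν) / Real.Gamma y :=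
            div_nonneg (Real.rpow_nonneg hx.le _) hG1.le
          linarith
  have hsub : ∀ r : ℕ, Summable (fun j : ℕ => u (r + j * N)) := by
    intro r
    apply summable_of_ratio_norm_eventually_le (r := 1/2) (by norm_num)
    filter_upwards [eventually_ge_atTop K] with j hj
    rw [Real.norm_of_nonneg (hupos _), Real.norm_of_nonneg (hupos _)]
    have harg : r + (j+1) * N = (r + j * N) + N := by ring
    rw [harg]
    apply step
    calc K ≤ j := hj
      _ ≤ j * N := Nat.le_mul_of_pos_right j hN.2
      _ ≤ r + j * N := Nat.le_add_left _ _
  have hres : ∀ r : ℕ, Summable (fun k : ℕ => if k % N = r then u k else 0) := by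
    intro r
    by_cases hr : r < N
    · have hinj : Function.Injective (fun j : ℕ => r + j * N) := by
        intro a b hab
        simp only at hab
        exact Nat.eq_of_mul_eq_mul_right hN.2 (by omega)
      have h0 : ∀ k ∉ Set.range (fun j : ℕ => r + j * N),
          (if k % N = r then u k else 0) = 0 := by
        intro k hk
        rw [if_neg]
        intro h
        refine hk ⟨k / N, ?_⟩
        simp only
        rw [← h]
        rw [Nat.mul_comm]
        exact Nat.mod_add_div k N
      rw [← Function.Injective.summable_iff hinj h0]
      apply (hsub r).congr
      intro j
      simp [Function.comp_apply, Nat.add_mul_mod_self_right,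
        Nat.mod_eq_of_lt hr]
    · apply summable_zero.congr
      intro k
      rw [if_neg]
      intro h
      exact hr (h ▸ Nat.mod_lt k hN.2)
  have huequ : ∀ k, u k = ∑ r ∈ Finset.range N, (if k % N = r then u k else 0) := by
    intro k
    rw [Finset.sum_ite_eq (Finset.range N) (k % N)]
    rw [if_pos (Finset.mem_range.2 (Nat.mod_lt k hN.2))]
  exact (summable_sum (fun r _ => hres r)).congr (fun k => (huequ k).symm)


set_option maxHeartbeats 2000000 in
/-- Two-variable Volterra integral inequality of Gronwall–Henry type:
if `0 ≤ φ(t,s) ≤ C (t-s)^{ε-1}` and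
`φ(t,s) ≤ a (t-s)^{μ-1} + b ∫ₛᵗ (t-τ)^{ν-1} φ(τ,s) dτ` for `0 ≤ s < t ≤ T`,
then `φ(t,s) ≤ a Γ(μ) (t-s)^{μ-1} E_{μ,ν}((bΓ(ν))^{1/ν} (t-s))`. -/
theorem gronwall_henry_two_var (a b μ ν C ε T : ℝ)
    (ha : 0 < a) (hb : 0 < b) (hμ : 0 < μ) (hν : 0 < ν) (hC : 0 < C) (hε : 0 < ε)
    (hT : 0 < T) (φ : ℝ → ℝ → ℝ)
    (hφ0 : ∀ s t : ℝ, 0 ≤ s → s < t → t ≤ T → 0 ≤ φ t s)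
    (hφC : ∀ s t : ℝ, 0 ≤ s → s < t → t ≤ T → φ t s ≤ C * (t - s) ^ (ε - 1))
    (hineq : ∀ s t : ℝ, 0 ≤ s → s < t → t ≤ T →
      φ t s ≤ a * (t - s) ^ (μ - 1) + b * ∫ τ in s..t, (t - τ) ^ (ν - 1) * φ τ s) :
    ∀ s t : ℝ, 0 ≤ s → s < t → t ≤ T →
      φ t s ≤ a * Real.Gamma μ * (t - s) ^ (μ - 1) *
        mittagLeffler μ ν ((b * Real.Gamma ν) ^ (1 / ν) * (t - s)) := by
  set c : ℝ := b * Real.Gamma ν with hcdef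
  have hc : 0 < c := mul_pos hb (Real.Gamma_pos_of_pos hν)
  have hΓμ : 0 < Real.Gamma μ := Real.Gamma_pos_of_pos hμ
  have hΓε : 0 < Real.Gamma ε := Real.Gamma_pos_of_pos hε
  have hposμ : ∀ k : ℕ, 0 < μ + (k:ℝ)*ν := fun k => by positivity
  have hposε : ∀ k : ℕ, 0 < ε + (k:ℝ)*ν := fun k => by positivity
  -- the iterated bound
  have key : ∀ n : ℕ, ∀ s t : ℝ, 0 ≤ s → s < t → t ≤ T →
      φ t s ≤ a * ∑ k ∈ Finset.range n,
          (c^k * Real.Gamma μ / Real.Gamma (μ + (k:ℝ)*ν)) * (t-s)^(μ + (k:ℝ)*ν - 1)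
        + C * (c^n * Real.Gamma ε / Real.Gamma (ε + (n:ℝ)*ν)) * (t-s)^(ε + (n:ℝ)*ν - 1) := by
    intro n
    induction n with
    | zero =>
      intro s t hs hst htT
      simpa [Real.Gamma_pos_of_pos hε, (Real.Gamma_pos_of_pos hε).ne']
        using hφC s t hs hst htT
    | succ n ih =>
      intro s t hs hst htT
      have hts : 0 < t - s := sub_pos.2 hst
      set G : ℝ → ℝ := fun τ =>
        (∑ k ∈ Finset.range n, (a * (c^k * Real.Gamma μ / Real.Gamma (μ + (k:ℝ)*ν)))
            * ((t-τ)^(ν-1) * (τ-s)^(μ + (k:ℝ)*ν - 1)))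
        + (C * (c^n * Real.Gamma ε / Real.Gamma (ε + (n:ℝ)*ν)))
            * ((t-τ)^(ν-1) * (τ-s)^(ε + (n:ℝ)*ν - 1)) with hG
      have hsumint : IntervalIntegrable (fun τ =>
          ∑ k ∈ Finset.range n, (a * (c^k * Real.Gamma μ / Real.Gamma (μ + (k:ℝ)*ν)))
            * ((t-τ)^(ν-1) * (τ-s)^(μ + (k:ℝ)*ν - 1))) volume s t := by
        have h := IntervalIntegrable.sum (μ := volume) (a := s) (b := t)
          (f := fun (k : ℕ) (τ : ℝ) => (a * (c^k * Real.Gamma μ / Real.Gamma (μ + (k:ℝ)*ν)))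
            * ((t-τ)^(ν-1) * (τ-s)^(μ + (k:ℝ)*ν - 1)))
          (Finset.range n)
          (fun k _ => ((myBetaGen (p := ν) (q := μ + (k:ℝ)*ν) hν (hposμ k) hst).1).const_mul _)
        have e : (∑ k ∈ Finset.range n, fun (τ : ℝ) =>
            (a * (c^k * Real.Gamma μ / Real.Gamma (μ + (k:ℝ)*ν)))
              * ((t-τ)^(ν-1) * (τ-s)^(μ + (k:ℝ)*ν - 1)))
            = fun τ => ∑ k ∈ Finset.range n,
              (a * (c^k * Real.Gamma μ / Real.Gamma (μ + (k:ℝ)*ν)))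
              * ((t-τ)^(ν-1) * (τ-s)^(μ + (k:ℝ)*ν - 1)) := by
          funext τ
          simp
        rw [e] at h
        exact h
      have hlastint : IntervalIntegrable (fun τ =>
          (C * (c^n * Real.Gamma ε / Real.Gamma (ε + (n:ℝ)*ν)))
            * ((t-τ)^(ν-1) * (τ-s)^(ε + (n:ℝ)*ν - 1))) volume s t :=
        ((myBetaGen (p := ν) (q := ε + (n:ℝ)*ν) hν (hposε n) hst).1).const_mul _
      have hGint : IntervalIntegrable G volume s t := by
        rw [hG]
        exact hsumint.add hlastint
      have hle : ∀ τ ∈ Ioc s t, (t-τ)^(ν-1) * φ τ s ≤ G τ := by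
        intro τ hτ
        have h1 : φ τ s ≤ a * ∑ k ∈ Finset.range n,
            (c^k * Real.Gamma μ / Real.Gamma (μ + (k:ℝ)*ν)) * (τ-s)^(μ + (k:ℝ)*ν - 1)
            + C * (c^n * Real.Gamma ε / Real.Gamma (ε + (n:ℝ)*ν)) * (τ-s)^(ε + (n:ℝ)*ν - 1) :=
          ih s τ hs hτ.1 (hτ.2.trans htT)
        have hνn : (0:ℝ) ≤ (t-τ)^(ν-1) := Real.rpow_nonneg (by linarith [hτ.2]) _
        calc (t-τ)^(ν-1) * φ τ s ≤ (t-τ)^(ν-1) * (a * ∑ k ∈ Finset.range n,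
              (c^k * Real.Gamma μ / Real.Gamma (μ + (k:ℝ)*ν)) * (τ-s)^(μ + (k:ℝ)*ν - 1)
              + C * (c^n * Real.Gamma ε / Real.Gamma (ε + (n:ℝ)*ν)) * (τ-s)^(ε + (n:ℝ)*ν - 1)) :=
            mul_le_mul_of_nonneg_left h1 hνn
          _ = G τ := by
            rw [hG]
            simp only [mul_add, Finset.mul_sum]
            congr 1
            · exact Finset.sum_congr rfl fun k _ => by ring
            · ring
      have hmono : (∫ τ in s..t, (t-τ)^(ν-1) * φ τ s) ≤ ∫ τ in s..t, G τ := by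
        rw [intervalIntegral.integral_of_le hst.le, intervalIntegral.integral_of_le hst.le]
        apply integral_mono_of_nonneg
        · refine (ae_restrict_iff' measurableSet_Ioc).2 (Eventually.of_forall fun τ hτ => ?_)
          exact mul_nonneg (Real.rpow_nonneg (by linarith [hτ.2]) _)
            (hφ0 s τ hs hτ.1 (hτ.2.trans htT))
        · exact hGint.1
        · exact (ae_restrict_iff' measurableSet_Ioc).2 (Eventually.of_forall hle)
      have hval : (∫ τ in s..t, G τ)
          = (∑ k ∈ Finset.range n, (a * (c^k * Real.Gamma μ / Real.Gamma (μ + (k:ℝ)*ν)))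
              * (Real.Gamma ν * Real.Gamma (μ + (k:ℝ)*ν) / Real.Gamma (ν + (μ + (k:ℝ)*ν))
                 * (t-s)^(ν + (μ + (k:ℝ)*ν) - 1)))
            + (C * (c^n * Real.Gamma ε / Real.Gamma (ε + (n:ℝ)*ν)))
              * (Real.Gamma ν * Real.Gamma (ε + (n:ℝ)*ν) / Real.Gamma (ν + (ε + (n:ℝ)*ν))
                 * (t-s)^(ν + (ε + (n:ℝ)*ν) - 1)) := by
        rw [hG, intervalIntegral.integral_add hsumint hlastint,
          intervalIntegral.integral_finset_sum (s := Finset.range n)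
            (f := fun (k:ℕ) (τ:ℝ) => (a * (c^k * Real.Gamma μ / Real.Gamma (μ + (k:ℝ)*ν)))
              * ((t-τ)^(ν-1) * (τ-s)^(μ + (k:ℝ)*ν - 1)))
            (fun k _ => ((myBetaGen (p := ν) (q := μ + (k:ℝ)*ν) hν (hposμ k) hst).1).const_mul
              (a * (c^k * Real.Gamma μ / Real.Gamma (μ + (k:ℝ)*ν))))]
        congr 1
        · exact Finset.sum_congr rfl fun k _ => by
            rw [intervalIntegral.integral_const_mul, (myBetaGen hν (hposμ k) hst).2]
        · rw [intervalIntegral.integral_const_mul, (myBetaGen hν (hposε n) hst).2]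
      have h0 := hineq s t hs hst htT
      have h2 : φ t s ≤ a * (t-s)^(μ-1) + b * ∫ τ in s..t, G τ := by
        have := mul_le_mul_of_nonneg_left hmono hb.le
        linarith
      rw [hval] at h2
      refine h2.trans (le_of_eq ?_)
      -- now pure algebra
      have hterm : ∀ k ∈ Finset.range n,
          b * (a * (c^k * Real.Gamma μ / Real.Gamma (μ + (k:ℝ)*ν))
          * (Real.Gamma ν * Real.Gamma (μ + (k:ℝ)*ν) / Real.Gamma (ν + (μ + (k:ℝ)*ν))
             * (t-s)^(ν + (μ + (k:ℝ)*ν) - 1)))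
          = a * (c^(k+1) * Real.Gamma μ / Real.Gamma (μ + ((k:ℝ)+1)*ν)
             * (t-s)^(μ + ((k:ℝ)+1)*ν - 1)) := by
        intro k _
        rw [show ν + (μ + (k:ℝ)*ν) - 1 = μ + ((k:ℝ)+1)*ν - 1 by ring,
          show ν + (μ + (k:ℝ)*ν) = μ + ((k:ℝ)+1)*ν by ring]
        have h1 : Real.Gamma (μ + (k:ℝ)*ν) ≠ 0 := (Real.Gamma_pos_of_pos (hposμ k)).ne'
        have h2 : Real.Gamma (μ + ((k:ℝ)+1)*ν) ≠ 0 := by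
          have : 0 < μ + ((k:ℝ)+1)*ν := by positivity
          exact (Real.Gamma_pos_of_pos this).ne'
        rw [pow_succ, hcdef]
        field_simp
      have hterme : b * (C * (c^n * Real.Gamma ε / Real.Gamma (ε + (n:ℝ)*ν))
          * (Real.Gamma ν * Real.Gamma (ε + (n:ℝ)*ν) / Real.Gamma (ν + (ε + (n:ℝ)*ν))
             * (t-s)^(ν + (ε + (n:ℝ)*ν) - 1)))
          = C * (c^(n+1) * Real.Gamma ε / Real.Gamma (ε + ((n:ℝ)+1)*ν))
             * (t-s)^(ε + ((n:ℝ)+1)*ν - 1) := by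
        rw [show ν + (ε + (n:ℝ)*ν) - 1 = ε + ((n:ℝ)+1)*ν - 1 by ring,
          show ν + (ε + (n:ℝ)*ν) = ε + ((n:ℝ)+1)*ν by ring]
        have h1 : Real.Gamma (ε + (n:ℝ)*ν) ≠ 0 := (Real.Gamma_pos_of_pos (hposε n)).ne'
        have h2 : Real.Gamma (ε + ((n:ℝ)+1)*ν) ≠ 0 := by
          have : 0 < ε + ((n:ℝ)+1)*ν := by positivity
          exact (Real.Gamma_pos_of_pos this).ne'
        rw [pow_succ, hcdef]
        field_simp
      have hA0 : (c^0 * Real.Gamma μ / Real.Gamma (μ + 0*ν)) * (t-s)^(μ + 0*ν - 1)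
          = (t-s)^(μ-1) := by
        simp [hΓμ.ne']
      rw [Finset.sum_range_succ']
      push_cast
      rw [mul_add b, Finset.mul_sum, Finset.sum_congr rfl hterm, hterme, mul_add a,
        Finset.mul_sum, hA0]
      ring
  -- pass to the limit
  intro s t hs hst htT
  have hts : 0 < t - s := sub_pos.2 hst
  set x : ℝ := c ^ (1/ν) * (t - s) with hxdef
  have hx : 0 < x := mul_pos (Real.rpow_pos_of_pos hc _) hts
  have hgen : ∀ (α : ℝ), 0 < α → ∀ k : ℕ,
      (c^k * Real.Gamma α / Real.Gamma (α + (k:ℝ)*ν)) * (t-s)^(α + (k:ℝ)*ν - 1)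
      = Real.Gamma α * (t-s)^(α-1) * (x^((k:ℝ)*ν) / Real.Gamma (α + (k:ℝ)*ν)) := by
    intro α hα k
    have h1 : x^((k:ℝ)*ν) = c^k * (t-s)^((k:ℝ)*ν) := by
      rw [hxdef, Real.mul_rpow (Real.rpow_nonneg hc.le _) hts.le,
        ← Real.rpow_natCast c k, ← Real.rpow_mul hc.le]
      congr 1
      field_simp
    have h2 : (t-s)^(α + (k:ℝ)*ν - 1) = (t-s)^(α-1) * (t-s)^((k:ℝ)*ν) := by
      rw [← Real.rpow_add hts]
      congr 1
      ring
    have h3 : Real.Gamma (α + (k:ℝ)*ν) ≠ 0 := by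
      have : 0 < α + (k:ℝ)*ν := by positivity
      exact (Real.Gamma_pos_of_pos this).ne'
    rw [h1, h2]
    field_simp
  have hsummu := mySummable hμ hν hx (ν := ν)
  have hsumme := mySummable hε hν hx (ν := ν)
  have hbound : ∀ n : ℕ, φ t s ≤
      a * Real.Gamma μ * (t-s)^(μ-1) * mittagLeffler μ ν x
      + C * Real.Gamma ε * (t-s)^(ε-1) * (x^((n:ℝ)*ν) / Real.Gamma (ε + (n:ℝ)*ν)) := by
    intro n
    have h1 := key n s t hs hst htT
    have h2 : a * ∑ k ∈ Finset.range n,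
        (c^k * Real.Gamma μ / Real.Gamma (μ + (k:ℝ)*ν)) * (t-s)^(μ + (k:ℝ)*ν - 1)
        = a * Real.Gamma μ * (t-s)^(μ-1) * ∑ k ∈ Finset.range n,
            (x^((k:ℝ)*ν) / Real.Gamma (μ + (k:ℝ)*ν)) := by
      rw [Finset.mul_sum, Finset.mul_sum]
      exact Finset.sum_congr rfl fun k _ => by rw [hgen μ hμ k]; ring
    have h3 : (∑ k ∈ Finset.range n, x^((k:ℝ)*ν) / Real.Gamma (μ + (k:ℝ)*ν))
        ≤ mittagLeffler μ ν x := by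
      apply Summable.sum_le_tsum
      · intro k _
        exact div_nonneg (Real.rpow_nonneg hx.le _) (Real.Gamma_pos_of_pos (hposμ k)).le
      · exact hsummu
    have h4 : C * (c^n * Real.Gamma ε / Real.Gamma (ε + (n:ℝ)*ν)) * (t-s)^(ε + (n:ℝ)*ν - 1)
        = C * Real.Gamma ε * (t-s)^(ε-1) * (x^((n:ℝ)*ν) / Real.Gamma (ε + (n:ℝ)*ν)) := by
      rw [mul_assoc, hgen ε hε n]
      ring
    rw [h2, h4] at h1
    refine h1.trans ?_
    have hnn : 0 ≤ a * Real.Gamma μ * (t-s)^(μ-1) := by positivity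
    have := mul_le_mul_of_nonneg_left h3 hnn
    linarith
  have hlim : Tendsto (fun n : ℕ =>
      a * Real.Gamma μ * (t-s)^(μ-1) * mittagLeffler μ ν x
      + C * Real.Gamma ε * (t-s)^(ε-1) * (x^((n:ℝ)*ν) / Real.Gamma (ε + (n:ℝ)*ν)))
      atTop (nhds (a * Real.Gamma μ * (t-s)^(μ-1) * mittagLeffler μ ν x)) := by
    have h0 := hsumme.tendsto_atTop_zero
    have := (tendsto_const_nhds (x := a * Real.Gamma μ * (t-s)^(μ-1) * mittagLeffler μ ν x)
      (f := atTop (α := ℕ))).add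
      ((h0.const_mul (C * Real.Gamma ε * (t-s)^(ε-1))))
    simpa using this
  exact ge_of_tendsto' hlim hbound
end

section
/- Let X be a Banach space, 0 < α < 1, 0 < γ < α/2 (so κ := α - γ satisfies α/2 < κ < α), T > 0, and constants a, b, L ≥ 0. Suppose functions u₁, u₂ ∈ C((0,T];X) satisfy ‖u₁(t) - u₂(t)‖ ≤ a ∫₀^t (t-τ)^{α-1} τ^{κ-1} e^{μt} e^{-μ(t-τ)} e^{-μτ} · (τ^{1-κ}‖v₁(τ)-v₂(τ)‖) dτ pointwise for functions v₁, v₂ with |‖v₁ - v₂‖|_μ := sup_t e^{-μt} t^{1-κ} ‖v₁(t)-v₂(t)‖ < ∞. Then for p = 1+ε with ε small enough that (1+ε)α - ε > 0 and (1+ε)κ - ε > 0, one has sup_{0≤t≤T} e^{-μt} t^{1-κ} ‖u₁(t)-u₂(t)‖ ≤ a B_μ B(p(α-1)+1, p(κ-1)+1)^{1/p} T^{α - ε/(1+ε)} |‖v₁-v₂‖|_μ, where B_μ = (∫₀^T e^{-μqτ} dτ)^{1/q} with 1/p + 1/q = 1 and B(·,·) is the Beta function; in particular B_μ → 0 as μ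 → ∞. -/
open MeasureTheory Set Real intervalIntegral

/-- The Beta function `B(x,y) = Γ(x)Γ(y)/Γ(x+y)`. -/
noncomputable def betaFn (x y : ℝ) : ℝ :=
  Real.Gamma x * Real.Gamma y / Real.Gamma (x + y)

lemma betaFn_pos {x y : ℝ} (hx : 0 < x) (hy : 0 < y) : 0 < betaFn x y :=
  div_pos (mul_pos (Real.Gamma_pos_of_pos hx) (Real.Gamma_pos_of_pos hy))
    (Real.Gamma_pos_of_pos (by linarith))

lemma betaIntegral_ofReal {x y : ℝ} (hx : 0 < x) (hy : 0 < y) :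
    Complex.betaIntegral x y = ((betaFn x y : ℝ) : ℂ) := by
  have h := Complex.Gamma_mul_Gamma_eq_betaIntegral (s := x) (t := y)
    (by simpa using hx) (by simpa using hy)
  have hne : Complex.Gamma ((x:ℂ) + y) ≠ 0 := by
    rw [← Complex.ofReal_add, Complex.Gamma_ofReal]
    exact_mod_cast (Real.Gamma_pos_of_pos (by linarith)).ne'
  rw [betaFn]
  push_cast
  rw [← Complex.Gamma_ofReal, ← Complex.Gamma_ofReal, ← Complex.Gamma_ofReal]
  push_cast
  field_simp
  rw [mul_comm, ← h]

/-- Integrability of the shifted Beta integrand. -/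
lemma beta_integrableOn {x y t : ℝ} (hx : 0 < x) (hy : 0 < y) (ht : 0 < t) :
    IntegrableOn (fun τ : ℝ => (t - τ) ^ (x - 1) * τ ^ (y - 1)) (Ioc 0 t) := by
  rw [← intervalIntegrable_iff_integrableOn_Ioc_of_le ht.le]
  have h1 : IntervalIntegrable (fun τ : ℝ => τ ^ (y - 1) * (t - τ) ^ (x - 1))
      volume 0 (t / 2) := by
    apply IntervalIntegrable.mul_continuousOn
    · exact intervalIntegral.intervalIntegrable_rpow' (by linarith)
    · apply ContinuousOn.rpow_const
      · exact (continuous_const.sub continuous_id).continuousOn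
      · intro τ hτ
        rw [uIcc_of_le (by linarith : (0:ℝ) ≤ t/2)] at hτ
        left
        have : τ ≤ t / 2 := hτ.2
        intro h
        have : t = τ := by linarith [sub_eq_zero.mp h]
        linarith
  have h2 : IntervalIntegrable (fun τ : ℝ => (t - τ) ^ (x - 1) * τ ^ (y - 1))
      volume (t / 2) t := by
    have base : IntervalIntegrable (fun s : ℝ => s ^ (x - 1)) volume 0 (t / 2) :=
      intervalIntegral.intervalIntegrable_rpow' (by linarith)
    have refl : IntervalIntegrable (fun τ : ℝ => (t - τ) ^ (x - 1)) volume (t - t/2) (t - 0) := by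
      simpa using (base.comp_sub_left t).symm
    apply IntervalIntegrable.mul_continuousOn
    · have : t - t/2 = t/2 := by ring
      simpa [this] using refl
    · apply ContinuousOn.rpow_const continuous_id.continuousOn
      intro τ hτ
      rw [uIcc_of_le (by linarith : t/2 ≤ t)] at hτ
      left
      have h1 : t/2 ≤ τ := hτ.1
      exact (by linarith : (0:ℝ) < τ).ne'
  have h1' : IntervalIntegrable (fun τ : ℝ => (t - τ) ^ (x - 1) * τ ^ (y - 1))
      volume 0 (t/2) := by
    simpa [mul_comm] using h1
  exact h1'.trans h2

lemma betaFn_symm (x y : ℝ) : betaFn x y = betaFn y x := by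
  rw [betaFn, betaFn, add_comm, mul_comm]

/-- The scaled Beta integral identity, real version. -/
lemma beta_integral_eq {x y t : ℝ} (hx : 0 < x) (hy : 0 < y) (ht : 0 < t) :
    ∫ τ in (0:ℝ)..t, (t - τ) ^ (x - 1) * τ ^ (y - 1) = t ^ (x + y - 1) * betaFn x y := by
  have key := Complex.betaIntegral_scaled (y : ℂ) (x : ℂ) ht
  have hcongr : ∀ τ ∈ uIcc (0:ℝ) t,
      (((t - τ) ^ (x - 1) * τ ^ (y - 1) : ℝ) : ℂ) =
        (τ : ℂ) ^ ((y : ℂ) - 1) * ((t : ℂ) - τ) ^ ((x : ℂ) - 1) := by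
    intro τ hτ
    rw [uIcc_of_le ht.le] at hτ
    rw [Complex.ofReal_mul, Complex.ofReal_cpow (sub_nonneg.2 hτ.2),
      Complex.ofReal_cpow hτ.1]
    push_cast
    ring
  have hC : ((∫ τ in (0:ℝ)..t, (t - τ) ^ (x - 1) * τ ^ (y - 1) : ℝ) : ℂ) =
      ((t ^ (x + y - 1) * betaFn x y : ℝ) : ℂ) := by
    rw [← intervalIntegral.integral_ofReal]
    rw [intervalIntegral.integral_congr hcongr, key]
    have hexp : ((y : ℂ) + x - 1) = ((x + y - 1 : ℝ) : ℂ) := by push_cast; ring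
    rw [betaIntegral_ofReal hy hx, hexp, ← Complex.ofReal_cpow ht.le,
      ← Complex.ofReal_mul, betaFn_symm y x]
  exact_mod_cast hC

lemma holder_step {α κ t pp qq : ℝ} (hpq : pp.HolderConjugate qq)
    (hα0 : 0 < α) (hκ0 : 0 < κ)
    (hα : 0 < pp * (α - 1) + 1) (hκ : 0 < pp * (κ - 1) + 1) (ht : 0 < t) (μ : ℝ) :
    ∫ τ in Ioc (0:ℝ) t, ((t - τ) ^ (α - 1) * τ ^ (κ - 1)) * Real.exp (-μ * (t - τ)) ≤
      (∫ τ in Ioc (0:ℝ) t, (t - τ) ^ (pp * (α - 1)) * τ ^ (pp * (κ - 1))) ^ (1 / pp) *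
      (∫ τ in Ioc (0:ℝ) t, Real.exp (-μ * qq * (t - τ))) ^ (1 / qq) := by
  set ν := volume.restrict (Ioc (0:ℝ) t) with hν
  have hfin : IsFiniteMeasure ν := by
    constructor
    rw [hν, Measure.restrict_apply_univ]
    exact measure_Ioc_lt_top
  set f : ℝ → ℝ := fun τ => (t - τ) ^ (α - 1) * τ ^ (κ - 1) with hf
  set g : ℝ → ℝ := fun τ => Real.exp (-μ * (t - τ)) with hg
  have hmem : ∀ᵐ τ ∂ν, τ ∈ Ioc (0:ℝ) t := ae_restrict_mem measurableSet_Ioc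
  have hf_nonneg : 0 ≤ᵐ[ν] f := by
    filter_upwards [hmem] with τ hτ
    exact mul_nonneg (Real.rpow_nonneg (by linarith [hτ.2]) _)
      (Real.rpow_nonneg hτ.1.le _)
  have hg_nonneg : 0 ≤ᵐ[ν] g := ae_of_all _ fun τ => (Real.exp_pos _).le
  have hf_meas : AEStronglyMeasurable f ν := by
    apply Measurable.aestronglyMeasurable
    fun_prop
  have hfp_eq : ∀ᵐ τ ∂ν, f τ ^ pp = (t - τ) ^ (pp * (α - 1)) * τ ^ (pp * (κ - 1)) := by
    filter_upwards [hmem] with τ hτ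
    rw [hf, Real.mul_rpow (Real.rpow_nonneg (by linarith [hτ.2]) _)
      (Real.rpow_nonneg hτ.1.le _),
      ← Real.rpow_mul (by linarith [hτ.2] : (0:ℝ) ≤ t - τ),
      ← Real.rpow_mul hτ.1.le, mul_comm (α - 1) pp, mul_comm (κ - 1) pp]
  have hfp_int : Integrable (fun τ => f τ ^ pp) ν := by
    have hb := beta_integrableOn (x := pp * (α - 1) + 1) (y := pp * (κ - 1) + 1) hα hκ ht
    simp only [add_sub_cancel_right] at hb
    exact hb.congr (Filter.EventuallyEq.symm hfp_eq)
  have hppos : 0 < pp := hpq.pos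
  have hq0 : (ENNReal.ofReal pp) ≠ 0 := by
    simp [ENNReal.ofReal_eq_zero, not_le, hppos]
  have hqtop : (ENNReal.ofReal pp) ≠ ⊤ := ENNReal.ofReal_ne_top
  have hf_mem : MemLp f (ENNReal.ofReal pp) ν := by
    apply (memLp_norm_rpow_iff (p := ENNReal.ofReal pp) hf_meas hq0 hqtop).1
    have h1 : Integrable (fun τ => ‖f τ‖ ^ pp) ν := by
      apply hfp_int.congr
      filter_upwards [hf_nonneg] with τ h
      rw [Real.norm_of_nonneg h]
    have h2 : MemLp (fun τ => ‖f τ‖ ^ pp) 1 ν := memLp_one_iff_integrable.2 h1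
    have e1 : ENNReal.ofReal pp / ENNReal.ofReal pp = 1 := ENNReal.div_self hq0 hqtop
    have e2 : (ENNReal.ofReal pp).toReal = pp := ENNReal.toReal_ofReal hppos.le
    rw [e1, e2]
    exact h2
  have hg_meas : AEStronglyMeasurable g ν := by
    apply Measurable.aestronglyMeasurable
    fun_prop
  have hg_memtop : MemLp g ⊤ ν := by
    apply memLp_top_of_bound hg_meas (Real.exp (|μ| * t))
    filter_upwards [hmem] with τ hτ
    rw [hg, Real.norm_of_nonneg (Real.exp_pos _).le]
    apply Real.exp_le_exp.2
    calc -μ * (t - τ) ≤ |(-μ) * (t - τ)| := le_abs_self _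
      _ = |μ| * (t - τ) := by
          rw [abs_mul, abs_neg, abs_of_nonneg (by linarith [hτ.2] : (0:ℝ) ≤ t - τ)]
      _ ≤ |μ| * t := by
          apply mul_le_mul_of_nonneg_left (by linarith [hτ.1]) (abs_nonneg μ)
  have hg_mem : MemLp g (ENNReal.ofReal qq) ν := hg_memtop.mono_exponent le_top
  have main := integral_mul_le_Lp_mul_Lq_of_nonneg hpq hf_nonneg hg_nonneg hf_mem hg_mem
  have e3 : ∫ τ, f τ ^ pp ∂ν = ∫ τ in Ioc (0:ℝ) t, (t - τ) ^ (pp * (α - 1)) * τ ^ (pp * (κ - 1)) :=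
    MeasureTheory.integral_congr_ae hfp_eq
  have e4 : ∫ τ, g τ ^ qq ∂ν = ∫ τ in Ioc (0:ℝ) t, Real.exp (-μ * qq * (t - τ)) := by
    apply MeasureTheory.integral_congr_ae
    apply ae_of_all
    intro τ
    show Real.exp (-μ * (t - τ)) ^ qq = Real.exp (-μ * qq * (t - τ))
    rw [← Real.exp_mul]
    ring_nf
  rw [e3, e4] at main
  exact main

lemma tendsto_Bmu {T q : ℝ} (hT : 0 < T) (hq : 0 < q) :
    Filter.Tendsto (fun μ' : ℝ => (∫ τ in (0:ℝ)..T, Real.exp (-μ' * q * τ)) ^ (1 / q))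
      Filter.atTop (nhds 0) := by
  have hnn : ∀ μ' : ℝ, 0 ≤ (∫ τ in (0:ℝ)..T, Real.exp (-μ' * q * τ)) ^ (1 / q) := by
    intro μ'
    apply Real.rpow_nonneg
    apply intervalIntegral.integral_nonneg hT.le
    intro τ _
    exact (Real.exp_pos _).le
  have hval : ∀ μ' : ℝ, 0 < μ' → ∫ τ in (0:ℝ)..T, Real.exp (-μ' * q * τ) ≤ 1 / (μ' * q) := by
    intro μ' hμ'
    have hcpos : 0 < μ' * q := mul_pos hμ' hq
    have hc : -(μ' * q) ≠ 0 := neg_ne_zero.2 hcpos.ne'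
    have heq : ∀ τ : ℝ, Real.exp (-μ' * q * τ) = Real.exp (-(μ' * q) * τ) := by
      intro τ; ring_nf
    simp only [heq]
    rw [intervalIntegral.integral_comp_mul_left (fun x => Real.exp x) hc]
    rw [mul_zero, integral_exp, Real.exp_zero]
    rw [smul_eq_mul]
    rw [inv_neg, one_div]
    nlinarith [Real.exp_pos (-(μ' * q) * T), inv_pos.2 hcpos]
  have hlim : Filter.Tendsto (fun μ' : ℝ => (1 / (μ' * q)) ^ (1 / q))
      Filter.atTop (nhds 0) := by
    have h1 : Filter.Tendsto (fun μ' : ℝ => μ' * q) Filter.atTop Filter.atTop :=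
      Filter.Tendsto.atTop_mul_const hq Filter.tendsto_id
    have h2 : Filter.Tendsto (fun μ' : ℝ => 1 / (μ' * q)) Filter.atTop (nhds 0) := by
      simpa [one_div, Function.comp_def] using tendsto_inv_atTop_zero.comp h1
    have h3 : ContinuousAt (fun x : ℝ => x ^ (1 / q)) 0 :=
      Real.continuousAt_rpow_const 0 (1 / q) (Or.inr (by positivity))
    have := h3.tendsto.comp h2
    rwa [Real.zero_rpow (by positivity : (1:ℝ)/q ≠ 0)] at this
  apply squeeze_zero' (Filter.Eventually.of_forall hnn) _ hlim
  filter_upwards [Filter.eventually_gt_atTop 0] with μ' hμ'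
  apply Real.rpow_le_rpow _ (hval μ' hμ') (by positivity)
  apply intervalIntegral.integral_nonneg hT.le
  intro τ _
  exact (Real.exp_pos _).le

/-- The key weighted estimate for the contraction argument in `F^{α-γ,γ}`:
if `‖u₁(t)-u₂(t)‖ ≤ a ∫₀ᵗ (t-τ)^{α-1} τ^{κ-1} e^{μt}e^{-μ(t-τ)}e^{-μτ}
(τ^{1-κ}‖v₁(τ)-v₂(τ)‖) dτ`, then with `p = 1+ε`, `1/p + 1/q = 1`,
`B_μ = (∫₀ᵀ e^{-μqτ}dτ)^{1/q}`,
`sup_t e^{-μt} t^{1-κ} ‖u₁(t)-u₂(t)‖ ≤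
 a B_μ B(p(α-1)+1, p(κ-1)+1)^{1/p} T^{α-ε/(1+ε)} |‖v₁-v₂‖|_μ`;
moreover `B_μ → 0` as `μ → ∞`. -/
theorem weighted_contraction_estimate {X : Type*} [NormedAddCommGroup X]
    [NormedSpace ℝ X]
    (α γ T a b L μ ε p q : ℝ)
    (hα : 0 < α) (hα1 : α < 1) (hγ : 0 < γ) (hγα : γ < α / 2)
    (hT : 0 < T) (ha : 0 ≤ a) (hb : 0 ≤ b) (hL : 0 ≤ L) (hμ : 0 < μ)
    (hε : 0 < ε) (hp : p = 1 + ε)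
    (hεα : (1 + ε) * α - ε > 0) (hεκ : (1 + ε) * (α - γ) - ε > 0)
    (hpq : 1 / p + 1 / q = 1)
    (u₁ u₂ v₁ v₂ : ℝ → X)
    (hvbdd : BddAbove (Set.range fun t : Set.Icc (0:ℝ) T =>
      Real.exp (-μ * (t : ℝ)) * (t : ℝ) ^ (1 - (α - γ)) * ‖v₁ (t : ℝ) - v₂ (t : ℝ)‖))
    (hineq : ∀ t ∈ Set.Icc (0:ℝ) T,
      ‖u₁ t - u₂ t‖ ≤ a * ∫ τ in (0:ℝ)..t,
        (t - τ) ^ (α - 1) * τ ^ ((α - γ) - 1) *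
          (Real.exp (μ * t) * Real.exp (-μ * (t - τ)) * Real.exp (-μ * τ)) *
          (τ ^ (1 - (α - γ)) * ‖v₁ τ - v₂ τ‖)) :
    (∀ t ∈ Set.Icc (0:ℝ) T,
      Real.exp (-μ * t) * t ^ (1 - (α - γ)) * ‖u₁ t - u₂ t‖ ≤
        a * (∫ τ in (0:ℝ)..T, Real.exp (-μ * q * τ)) ^ (1 / q) *
          (betaFn (p * (α - 1) + 1) (p * ((α - γ) - 1) + 1)) ^ (1 / p) *
          T ^ (α - ε / (1 + ε)) *
          (⨆ t : Set.Icc (0:ℝ) T,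
            Real.exp (-μ * (t : ℝ)) * (t : ℝ) ^ (1 - (α - γ)) *
              ‖v₁ (t : ℝ) - v₂ (t : ℝ)‖)) ∧
    Filter.Tendsto (fun μ' : ℝ => (∫ τ in (0:ℝ)..T, Real.exp (-μ' * q * τ)) ^ (1 / q))
      Filter.atTop (nhds 0) := by
  have h1ε : (0:ℝ) < 1 + ε := by linarith
  have hp1 : 1 < p := by rw [hp]; linarith
  have hppos : 0 < p := by linarith
  have hpC : Real.HolderConjugate p q := Real.holderConjugate_iff.2 ⟨hp1, by simpa [one_div] using hpq⟩
  have hqpos : 0 < q := hpC.symm.pos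
  set κ := α - γ with hκdef
  have hκpos : 0 < κ := by rw [hκdef]; linarith
  have hκ1 : κ < 1 := by rw [hκdef]; linarith
  have hx : 0 < p * (α - 1) + 1 := by
    have : p * (α - 1) + 1 = (1 + ε) * α - ε := by rw [hp]; ring
    linarith
  have hy : 0 < p * (κ - 1) + 1 := by
    have : p * (κ - 1) + 1 = (1 + ε) * κ - ε := by rw [hp]; ring
    linarith
  have hc_pos : 0 < α - ε / (1 + ε) := by
    rw [sub_pos, div_lt_iff₀ h1ε]
    nlinarith
  set M := (⨆ t : Set.Icc (0:ℝ) T,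
      Real.exp (-μ * (t : ℝ)) * (t : ℝ) ^ (1 - κ) * ‖v₁ (t : ℝ) - v₂ (t : ℝ)‖) with hM
  have hMle : ∀ s : ℝ, s ∈ Set.Icc (0:ℝ) T →
      Real.exp (-μ * s) * s ^ (1 - κ) * ‖v₁ s - v₂ s‖ ≤ M := by
    intro s hs
    exact le_ciSup hvbdd (⟨s, hs⟩ : Set.Icc (0:ℝ) T)
  have hM0 : 0 ≤ M := by
    have h := hMle 0 ⟨le_refl 0, hT.le⟩
    rwa [Real.zero_rpow (by linarith : 1 - κ ≠ 0), mul_zero, zero_mul] at h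
  set B1 := ∫ τ in (0:ℝ)..T, Real.exp (-μ * q * τ) with hB1def
  have hB1 : 0 ≤ B1 := by
    apply intervalIntegral.integral_nonneg hT.le
    intro τ _
    exact (Real.exp_pos _).le
  have hBeta : 0 < betaFn (p * (α - 1) + 1) (p * (κ - 1) + 1) := betaFn_pos hx hy
  have hRHS0 : 0 ≤ a * B1 ^ (1 / q) * (betaFn (p * (α - 1) + 1) (p * (κ - 1) + 1)) ^ (1 / p) *
      T ^ (α - ε / (1 + ε)) * M := by
    apply mul_nonneg _ hM0
    apply mul_nonneg _ (Real.rpow_nonneg hT.le _)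
    apply mul_nonneg _ (Real.rpow_nonneg hBeta.le _)
    exact mul_nonneg ha (Real.rpow_nonneg hB1 _)
  constructor
  · intro t ht
    rcases ht.1.eq_or_lt with h0 | h0
    · rw [← h0, Real.zero_rpow (by linarith : 1 - κ ≠ 0), mul_zero, zero_mul]
      exact hRHS0
    have htT : t ≤ T := ht.2
    set f : ℝ → ℝ := fun τ => (t - τ) ^ (α - 1) * τ ^ (κ - 1) with hfdef
    set g : ℝ → ℝ := fun τ => Real.exp (-μ * (t - τ)) with hgdef
    set S := ∫ τ in Ioc (0:ℝ) t, f τ * g τ with hSdef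
    have hfg_nonneg : ∀ τ ∈ Ioc (0:ℝ) t, 0 ≤ f τ * g τ := by
      intro τ hτ
      apply mul_nonneg
      · exact mul_nonneg (Real.rpow_nonneg (by linarith [hτ.2]) _)
          (Real.rpow_nonneg hτ.1.le _)
      · exact (Real.exp_pos _).le
    have hS0 : 0 ≤ S := setIntegral_nonneg measurableSet_Ioc hfg_nonneg
    have hfg_int : IntegrableOn (fun τ => f τ * g τ) (Ioc (0:ℝ) t) := by
      rw [← intervalIntegrable_iff_integrableOn_Ioc_of_le h0.le]
      apply IntervalIntegrable.mul_continuousOn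
      · rw [intervalIntegrable_iff_integrableOn_Ioc_of_le h0.le]
        exact beta_integrableOn hα hκpos h0
      · apply Continuous.continuousOn
        fun_prop
    -- pointwise bound on the full integrand
    set H : ℝ → ℝ := fun τ => (t - τ) ^ (α - 1) * τ ^ (κ - 1) *
        (Real.exp (μ * t) * Real.exp (-μ * (t - τ)) * Real.exp (-μ * τ)) *
        (τ ^ (1 - κ) * ‖v₁ τ - v₂ τ‖) with hHdef
    have hpt : ∀ τ ∈ Ioc (0:ℝ) t, H τ ≤ Real.exp (μ * t) * M * (f τ * g τ) := by
      intro τ hτ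
      have hMτ : Real.exp (-μ * τ) * τ ^ (1 - κ) * ‖v₁ τ - v₂ τ‖ ≤ M :=
        hMle τ ⟨hτ.1.le, hτ.2.trans htT⟩
      have hkey : H τ = (Real.exp (μ * t) * (f τ * g τ)) *
          (Real.exp (-μ * τ) * τ ^ (1 - κ) * ‖v₁ τ - v₂ τ‖) := by
        rw [hHdef, hfdef, hgdef]; ring
      rw [hkey]
      have h1 : 0 ≤ Real.exp (μ * t) * (f τ * g τ) :=
        mul_nonneg (Real.exp_pos _).le (hfg_nonneg τ hτ)
      calc (Real.exp (μ * t) * (f τ * g τ)) *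
          (Real.exp (-μ * τ) * τ ^ (1 - κ) * ‖v₁ τ - v₂ τ‖)
          ≤ (Real.exp (μ * t) * (f τ * g τ)) * M := mul_le_mul_of_nonneg_left hMτ h1
        _ = Real.exp (μ * t) * M * (f τ * g τ) := by ring
    have hIle : (∫ τ in (0:ℝ)..t, H τ) ≤ Real.exp (μ * t) * M * S := by
      rw [intervalIntegral.integral_of_le h0.le]
      by_cases hInt : IntegrableOn H (Ioc (0:ℝ) t)
      · calc (∫ τ in Ioc (0:ℝ) t, H τ)
            ≤ ∫ τ in Ioc (0:ℝ) t, Real.exp (μ * t) * M * (f τ * g τ) :=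
              setIntegral_mono_on hInt (hfg_int.const_mul _) measurableSet_Ioc hpt
          _ = Real.exp (μ * t) * M * S := by
              rw [hSdef, ← MeasureTheory.integral_const_mul]
      · rw [MeasureTheory.integral_undef hInt]
        exact mul_nonneg (mul_nonneg (Real.exp_pos _).le hM0) hS0
    have hstepA : ‖u₁ t - u₂ t‖ ≤ a * (Real.exp (μ * t) * M * S) := by
      refine le_trans (hineq t ht) (mul_le_mul_of_nonneg_left ?_ ha)
      exact hIle
    -- Hölder
    have hHolder := holder_step hpC hα hκpos hx hy h0 μ
    set P := ∫ τ in Ioc (0:ℝ) t, (t - τ) ^ (p * (α - 1)) * τ ^ (p * (κ - 1)) with hPdef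
    set Q := ∫ τ in Ioc (0:ℝ) t, Real.exp (-μ * q * (t - τ)) with hQdef
    have hSle : S ≤ P ^ (1 / p) * Q ^ (1 / q) := hHolder
    -- evaluate P
    have hPval : P = t ^ (p * (α - 1) + p * (κ - 1) + 1) *
        betaFn (p * (α - 1) + 1) (p * (κ - 1) + 1) := by
      have hPeq := beta_integral_eq (x := p * (α - 1) + 1) (y := p * (κ - 1) + 1) hx hy h0
      simp only [add_sub_cancel_right] at hPeq
      rw [hPdef, ← intervalIntegral.integral_of_le h0.le, hPeq]
      ring_nf
    -- bound Q
    have hQval : Q = ∫ s in (0:ℝ)..t, Real.exp (-μ * q * s) := by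
      rw [hQdef, ← intervalIntegral.integral_of_le h0.le]
      have := intervalIntegral.integral_comp_sub_left
        (a := (0:ℝ)) (b := t) (fun s => Real.exp (-μ * q * s)) t
      simpa using this
    have hQB1 : Q ≤ B1 := by
      rw [hQval, hB1def]
      apply intervalIntegral.integral_mono_interval (le_refl (0:ℝ)) h0.le htT
      · apply ae_of_all
        intro τ
        exact (Real.exp_pos _).le
      · apply Continuous.intervalIntegrable
        fun_prop
    have hQ0 : 0 ≤ Q := by
      apply setIntegral_nonneg measurableSet_Ioc
      intro τ _
      exact (Real.exp_pos _).le
    -- combine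
    have hexp_cancel : Real.exp (-μ * t) * Real.exp (μ * t) = 1 := by
      rw [← Real.exp_add]; ring_nf; exact Real.exp_zero
    have hchain : Real.exp (-μ * t) * t ^ (1 - κ) * ‖u₁ t - u₂ t‖ ≤
        a * M * t ^ (1 - κ) * S := by
      have h1 : Real.exp (-μ * t) * t ^ (1 - κ) * ‖u₁ t - u₂ t‖ ≤
          Real.exp (-μ * t) * t ^ (1 - κ) * (a * (Real.exp (μ * t) * M * S)) := by
        apply mul_le_mul_of_nonneg_left hstepA
        exact mul_nonneg (Real.exp_pos _).le (Real.rpow_nonneg h0.le _)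
      refine h1.trans (le_of_eq ?_)
      have : Real.exp (-μ * t) * t ^ (1 - κ) * (a * (Real.exp (μ * t) * M * S)) =
          (Real.exp (-μ * t) * Real.exp (μ * t)) * (a * M * t ^ (1 - κ) * S) := by ring
      rw [this, hexp_cancel, one_mul]
    -- Hölder + values
    have hchain2 : a * M * t ^ (1 - κ) * S ≤
        a * M * t ^ (1 - κ) * (P ^ (1 / p) * Q ^ (1 / q)) := by
      apply mul_le_mul_of_nonneg_left hSle
      exact mul_nonneg (mul_nonneg ha hM0) (Real.rpow_nonneg h0.le _)
    have hPpow : P ^ (1 / p) = t ^ ((p * (α - 1) + p * (κ - 1) + 1) * (1 / p)) *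
        (betaFn (p * (α - 1) + 1) (p * (κ - 1) + 1)) ^ (1 / p) := by
      rw [hPval, Real.mul_rpow (Real.rpow_nonneg h0.le _) hBeta.le,
        ← Real.rpow_mul h0.le]
    have htpow : t ^ (1 - κ) * t ^ ((p * (α - 1) + p * (κ - 1) + 1) * (1 / p)) =
        t ^ (α - ε / (1 + ε)) := by
      rw [← Real.rpow_add h0]
      congr 1
      rw [hp, hκdef]
      field_simp
      ring
    have hfinal : a * M * t ^ (1 - κ) * (P ^ (1 / p) * Q ^ (1 / q)) ≤
        a * B1 ^ (1 / q) * (betaFn (p * (α - 1) + 1) (p * (κ - 1) + 1)) ^ (1 / p) *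
          T ^ (α - ε / (1 + ε)) * M := by
      rw [hPpow]
      have heq : a * M * t ^ (1 - κ) *
          (t ^ ((p * (α - 1) + p * (κ - 1) + 1) * (1 / p)) *
            (betaFn (p * (α - 1) + 1) (p * (κ - 1) + 1)) ^ (1 / p) * Q ^ (1 / q)) =
          a * Q ^ (1 / q) * (betaFn (p * (α - 1) + 1) (p * (κ - 1) + 1)) ^ (1 / p) *
            (t ^ (1 - κ) * t ^ ((p * (α - 1) + p * (κ - 1) + 1) * (1 / p))) * M := by
        ring
      rw [heq, htpow]
      have hQpow : Q ^ (1 / q) ≤ B1 ^ (1 / q) :=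
        Real.rpow_le_rpow hQ0 hQB1 (by positivity)
      have htT' : t ^ (α - ε / (1 + ε)) ≤ T ^ (α - ε / (1 + ε)) :=
        Real.rpow_le_rpow h0.le htT hc_pos.le
      have h2 : 0 ≤ (betaFn (p * (α - 1) + 1) (p * (κ - 1) + 1)) ^ (1 / p) :=
        Real.rpow_nonneg hBeta.le _
      gcongr
    exact hchain.trans (hchain2.trans hfinal)
  · exact tendsto_Bmu hT hqpos
end
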